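/- arXiv:2202.10764 — 3 statements merged into one kernel-verified Lean document; each statement's English description precedes it below -/
import Mathlib

section
/- Let E be a complex Banach space, let z₀ ∈ ℂ, and let F : ℂ → E be meromorphic at z₀. Suppose that for all s in some punctured neighborhood of z₀ with Im((s − z₀)²) ≠ 0 one has ‖F(s)‖ · |Im((s − z₀)²)| ≤ 1. Then the meromorphic order of F at z₀ is at least −2; i.e., F has a pole of order at most 2 at z₀. -/
open Complex Filter

/-- If a meromorphic function `F` satisfies `‖F s‖ ≤ |Im((s - z₀)²)|⁻¹` on a punctured
neighborhood of `z₀`, then its pole at `z₀` has order at most `2`. -/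
theorem stmt1 {E : Type*} [NormedAddCommGroup E] [NormedSpace ℂ E]
    (z₀ : ℂ) (F : ℂ → E) (hF : MeromorphicAt F z₀)
    (hbound : ∀ᶠ s in nhdsWithin z₀ {z₀}ᶜ,
      ((s - z₀) ^ 2).im ≠ 0 → ‖F s‖ * |((s - z₀) ^ 2).im| ≤ 1) :
    (-2 : WithTop ℤ) ≤ meromorphicOrderAt F z₀ := by
  by_contra hcon
  push_neg at hcon
  have htop : meromorphicOrderAt F z₀ ≠ ⊤ := fun h => by rw [h] at hcon; exact absurd hcon (by simp)
  obtain ⟨n, hn⟩ : ∃ n : ℤ, meromorphicOrderAt F z₀ = n := by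
    cases' h : meromorphicOrderAt F z₀ with n
    · exact absurd h htop
    · exact ⟨n, rfl⟩
  rw [hn] at hcon
  have hn2 : n < -2 := by
    have h2 : ((-2 : ℤ) : WithTop ℤ) = -2 := by rfl
    exact WithTop.coe_lt_coe.mp (h2 ▸ hcon)
  obtain ⟨g, hg, hgz, hfg⟩ := (meromorphicOrderAt_eq_int_iff hF).mp hn
  set c : ℂ := (1 + Complex.I) / Real.sqrt 2 with hc_def
  have hc2 : c ^ 2 = Complex.I := by
    rw [hc_def]
    have h2 : (Real.sqrt 2 : ℂ) ^ 2 = 2 := by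
      rw [← Complex.ofReal_pow, Real.sq_sqrt (by norm_num)]; norm_num
    field_simp [div_pow, h2]
    rw [add_sq]
    simp [Complex.I_sq]
    rw [h2]; ring
  have hcnorm : ‖c‖ = 1 := by
    have h : ‖c‖ ^ 2 = 1 := by rw [← norm_pow, hc2, Complex.norm_I]
    nlinarith [norm_nonneg c]
  have hcne : c ≠ 0 := fun h => by rw [h] at hcnorm; simp at hcnorm
  set φ : ℝ → ℂ := fun t => z₀ + t * c with hφ_def
  have hφ_cont : Tendsto φ (nhdsWithin 0 (Set.Ioi 0)) (nhds z₀) := by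
    have : Tendsto φ (nhds 0) (nhds (φ 0)) :=
      ((continuous_const.add (Complex.continuous_ofReal.mul continuous_const)).tendsto 0)
    simpa [hφ_def] using this.mono_left nhdsWithin_le_nhds
  have hφ_tendsto : Tendsto φ (nhdsWithin 0 (Set.Ioi 0)) (nhdsWithin z₀ {z₀}ᶜ) := by
    apply tendsto_nhdsWithin_of_tendsto_nhds_of_eventually_within _ hφ_cont
    filter_upwards [self_mem_nhdsWithin] with t ht
    simp only [hφ_def, Set.mem_compl_iff, Set.mem_singleton_iff]
    intro h
    have : (t : ℂ) * c = 0 := by linear_combination h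
    rcases mul_eq_zero.mp this with h' | h'
    · exact absurd (by exact_mod_cast h') (ne_of_gt ht)
    · exact hcne h'
  have key : ∀ᶠ t in nhdsWithin 0 (Set.Ioi 0), ‖g (φ t)‖ ≤ t := by
    have hIoo : Set.Ioo (0:ℝ) 1 ∈ nhdsWithin 0 (Set.Ioi 0) :=
      Ioo_mem_nhdsGT_of_mem (by norm_num : (0:ℝ) ∈ Set.Ico (0:ℝ) 1)
    filter_upwards [hφ_tendsto.eventually hfg, hφ_tendsto.eventually hbound, hIoo]
      with t heq hbd ht
    obtain ⟨ht0, ht1⟩ := ht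
    have htne : (t : ℝ) ≠ 0 := ne_of_gt ht0
    have hsq : (φ t - z₀) ^ 2 = (t^2 : ℝ) * Complex.I := by
      simp only [hφ_def, add_sub_cancel_left, mul_pow, hc2]
      push_cast; ring
    have him : ((φ t - z₀) ^ 2).im = t ^ 2 := by
      rw [hsq]; simp [← Complex.ofReal_pow]
    have himne : ((φ t - z₀) ^ 2).im ≠ 0 := by
      rw [him]; positivity
    have hb := hbd himne
    rw [him, heq] at hb
    have hφn : ‖φ t - z₀‖ = t := by
      simp [hφ_def, hcnorm, abs_of_pos ht0]
    have hnorm : ‖(φ t - z₀) ^ n • g (φ t)‖ = t ^ n * ‖g (φ t)‖ := by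
      rw [norm_smul, norm_zpow, hφn]
    rw [hnorm, abs_of_pos (by positivity : (0:ℝ) < t ^ 2)] at hb
    have hb' : t ^ (n + 2) * ‖g (φ t)‖ ≤ 1 := by
      have : t ^ (n + 2) = t ^ n * t ^ 2 := by
        rw [zpow_add₀ htne, zpow_ofNat]
      rw [this]
      calc t ^ n * t ^ 2 * ‖g (φ t)‖ = t ^ n * ‖g (φ t)‖ * t ^ 2 := by ring
        _ ≤ 1 := hb
    have hmono : t ^ (-1 : ℤ) ≤ t ^ (n + 2) :=
      zpow_le_zpow_right_of_le_one₀ ht0 ht1.le (by omega)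
    have hinv : t⁻¹ * ‖g (φ t)‖ ≤ 1 := by
      calc t⁻¹ * ‖g (φ t)‖ = t ^ (-1 : ℤ) * ‖g (φ t)‖ := by rw [zpow_neg_one]
        _ ≤ t ^ (n + 2) * ‖g (φ t)‖ := mul_le_mul_of_nonneg_right hmono (norm_nonneg _)
        _ ≤ 1 := hb'
    calc ‖g (φ t)‖ = t * (t⁻¹ * ‖g (φ t)‖) := by field_simp
      _ ≤ t * 1 := mul_le_mul_of_nonneg_left hinv ht0.le
      _ = t := mul_one t
  -- take limits
  have hg_lim : Tendsto (fun t => ‖g (φ t)‖) (nhdsWithin 0 (Set.Ioi 0)) (nhds ‖g z₀‖) :=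
    ((hg.continuousAt.tendsto.comp hφ_cont).norm)
  have ht_lim : Tendsto (fun t : ℝ => t) (nhdsWithin 0 (Set.Ioi 0)) (nhds 0) :=
    tendsto_id.mono_left nhdsWithin_le_nhds
  have hle : ‖g z₀‖ ≤ 0 := le_of_tendsto_of_tendsto hg_lim ht_lim key
  exact hgz (norm_le_zero_iff.mp hle)
end

section
/- Fix a real number ω > 0 and s ∈ ℂ, and for κ ∈ ℝ set β_κ(s) := (1/2)·Γ((s + iωκ + 1)/2)·Γ((s − iωκ + 1)/2). Then, as κ → +∞ along the reals, (β_κ(s) / β_κ(1 − s)) · (ωκ/2)^{1 − 2s} → 1, where (ωκ/2)^{1−2s} denotes the complex power of the positive real number ωκ/2. -/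
open Complex Filter

/-- `β_κ(s) = (1/2)·Γ((s + iωκ + 1)/2)·Γ((s − iωκ + 1)/2)`. -/
noncomputable def betaFun (ω κ : ℝ) (s : ℂ) : ℂ :=
  (1/2) * Complex.Gamma ((s + Complex.I * ω * κ + 1) / 2) *
    Complex.Gamma ((s - Complex.I * ω * κ + 1) / 2)

namespace Stmt5Aux

open MeasureTheory Set

lemma norm_cexp_neg_mul (w : ℂ) (u : ℝ) : ‖Complex.exp (-w * u)‖ = Real.exp (-w.re * u) := by
  rw [Complex.norm_exp]
  congr 1
  simp [Complex.mul_re]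

lemma cont_ofReal_cpow (c : ℂ) : ContinuousOn (fun u : ℝ => (u : ℂ) ^ c) (Ioi 0) := by
  intro u hu
  exact (Complex.continuousAt_ofReal_cpow_const u c (Or.inr (ne_of_gt hu))).continuousWithinAt

lemma integrable_rpow_exp {ρ σ : ℝ} (hρ : 0 < ρ) (hσ : 0 < σ) :
    IntegrableOn (fun u : ℝ => u ^ (ρ - 1) * Real.exp (-σ * u)) (Ioi 0) := by
  have h := Real.GammaIntegral_convergent hρ
  rw [← mul_zero σ, ← integrableOn_Ioi_comp_mul_left_iff _ _ hσ] at h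
  have h2 : IntegrableOn (fun x => σ ^ (1 - ρ) * (Real.exp (-(σ * x)) * (σ * x) ^ (ρ - 1))) (Ioi 0) :=
    h.const_mul (σ ^ (1 - ρ))
  refine IntegrableOn.congr_fun h2 (fun u hu => ?_) measurableSet_Ioi
  rw [mem_Ioi] at hu
  rw [Real.mul_rpow hσ.le hu.le, neg_mul]
  have : σ ^ (1 - ρ) * σ ^ (ρ - 1) = 1 := by
    rw [← Real.rpow_add hσ]; norm_num
  calc σ ^ (1 - ρ) * (Real.exp (-(σ * u)) * (σ ^ (ρ - 1) * u ^ (ρ - 1)))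
      = (σ ^ (1 - ρ) * σ ^ (ρ - 1)) * (u ^ (ρ - 1) * Real.exp (-(σ * u))) := by ring
    _ = u ^ (ρ - 1) * Real.exp (-(σ * u)) := by rw [this, one_mul]

lemma integrable_master {ρ σ : ℝ} (hρ : 0 < ρ) (hσ : 0 < σ) :
    IntegrableOn (fun u : ℝ => Real.exp (-σ * u) * (u ^ (ρ - 1) + 1)) (Ioi 0) := by
  have h1 := integrable_rpow_exp hρ hσ
  have h2 := exp_neg_integrableOn_Ioi (0:ℝ) hσ
  have h3 : IntegrableOn (fun u : ℝ => u ^ (ρ - 1) * Real.exp (-σ * u) + Real.exp (-σ * u)) (Ioi 0) :=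
    h1.add h2
  refine IntegrableOn.congr_fun h3 (fun u _ => by ring) measurableSet_Ioi

lemma laplace_norm {c : ℂ} {u : ℝ} (hu : 0 < u) (w : ℂ) :
    ‖(u : ℂ) ^ (c - 1) * Complex.exp (-w * u)‖ = u ^ (c.re - 1) * Real.exp (-w.re * u) := by
  rw [norm_mul, Complex.norm_cpow_eq_rpow_re_of_pos hu, sub_re, one_re,
    norm_cexp_neg_mul]

lemma laplace_meas (c w : ℂ) :
    AEStronglyMeasurable (fun u : ℝ => (u : ℂ) ^ (c - 1) * Complex.exp (-w * u))
      (volume.restrict (Ioi 0)) := by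
  refine ContinuousOn.aestronglyMeasurable ?_ measurableSet_Ioi
  exact (cont_ofReal_cpow (c - 1)).mul
    (Complex.continuous_exp.comp (continuous_const.mul continuous_ofReal)).continuousOn

lemma laplace_integrable {c : ℂ} (hc : 0 < c.re) {w : ℂ} (hw : 0 < w.re) :
    IntegrableOn (fun u : ℝ => (u : ℂ) ^ (c - 1) * Complex.exp (-w * u)) (Ioi 0) := by
  refine Integrable.mono' (integrable_rpow_exp hc hw) (laplace_meas c w) ?_
  filter_upwards [ae_restrict_mem measurableSet_Ioi] with u hu
  rw [laplace_norm hu]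

lemma laplace_eq {c : ℂ} (hc : 0 < c.re) {w : ℂ} (hw : 0 < w.re) :
    ∫ u in Ioi (0:ℝ), (u : ℂ) ^ (c - 1) * Complex.exp (-w * u) = Gamma c * w ^ (-c) := by
  set U : Set ℂ := {w | 0 < w.re} with hUdef
  have hU : IsOpen U := isOpen_lt continuous_const Complex.continuous_re
  set L : ℂ → ℂ := fun w => ∫ u in Ioi (0:ℝ), (u : ℂ) ^ (c - 1) * Complex.exp (-w * u) with hL
  set R : ℂ → ℂ := fun w => Gamma c * w ^ (-c) with hR
  have hLd : DifferentiableOn ℂ L U := by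
    intro w₀ hw₀
    have hw₀re : 0 < w₀.re := hw₀
    have key := hasDerivAt_integral_of_dominated_loc_of_deriv_le (μ := volume.restrict (Ioi 0))
      (F := fun w (u : ℝ) => (u : ℂ) ^ (c - 1) * Complex.exp (-w * u))
      (F' := fun w (u : ℝ) => (u : ℂ) ^ (c - 1) * (Complex.exp (-w * u) * (-(u : ℂ))))
      (x₀ := w₀) (bound := fun u : ℝ => u ^ ((c.re + 1) - 1) * Real.exp (-(w₀.re / 2) * u))
      (s := Metric.ball w₀ (w₀.re / 2)) (Metric.ball_mem_nhds _ (by positivity))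
      (Eventually.of_forall fun w => laplace_meas c w) (laplace_integrable hc hw₀re)
      ?_ ?_ (integrable_rpow_exp (by linarith) (by positivity)) ?_
    · exact (key.2.differentiableAt).differentiableWithinAt
    · refine ContinuousOn.aestronglyMeasurable ?_ measurableSet_Ioi
      exact (cont_ofReal_cpow (c - 1)).mul
        (((Complex.continuous_exp.comp (continuous_const.mul continuous_ofReal)).mul
          (continuous_ofReal.neg)).continuousOn)
    · filter_upwards [ae_restrict_mem measurableSet_Ioi] with u hu
      rw [mem_Ioi] at hu
      intro x hx
      have hxre : w₀.re / 2 < x.re := by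
        have := Complex.abs_re_le_norm (x - w₀)
        rw [Complex.sub_re] at this
        have hd : ‖x - w₀‖ < w₀.re / 2 := by
          rw [Metric.mem_ball, Complex.dist_eq] at hx; exact hx
        have := abs_lt.mp (lt_of_le_of_lt this hd)
        linarith [this.1]
      rw [norm_mul, norm_mul,
        Complex.norm_exp, Complex.norm_cpow_eq_rpow_re_of_pos hu,
        sub_re, one_re]
      have hre : (-x * u).re = -x.re * u := by simp [Complex.mul_re]
      rw [hre]
      have h1 : Real.exp (-x.re * u) ≤ Real.exp (-(w₀.re / 2) * u) := by
        apply Real.exp_le_exp.2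
        have := hu.le
        nlinarith
      have h2 : ‖-(u:ℂ)‖ = u := by
        rw [norm_neg, Complex.norm_real, Real.norm_eq_abs, abs_of_pos hu]
      rw [h2]
      calc u ^ (c.re - 1) * (Real.exp (-x.re * u) * u)
          ≤ u ^ (c.re - 1) * (Real.exp (-(w₀.re/2) * u) * u) := by
            apply mul_le_mul_of_nonneg_left _ (Real.rpow_nonneg hu.le _)
            exact mul_le_mul_of_nonneg_right h1 hu.le
        _ = u ^ ((c.re + 1) - 1) * Real.exp (-(w₀.re/2) * u) := by
            rw [show (c.re + 1) - 1 = (c.re - 1) + 1 by ring, Real.rpow_add hu, Real.rpow_one]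
            ring
    · filter_upwards [ae_restrict_mem measurableSet_Ioi] with u hu
      intro x _
      have : HasDerivAt (fun x : ℂ => Complex.exp (-x * u)) (Complex.exp (-x * u) * (-(u:ℂ))) x := by
        have h := (((hasDerivAt_id x).neg).mul_const (u:ℂ)).cexp
        simpa using h
      simpa using this.const_mul ((u:ℂ) ^ (c - 1))
  have hRd : DifferentiableOn ℂ R U := by
    intro w hw
    exact ((differentiableAt_id.cpow (differentiableAt_const _)
      (Or.inl hw)).const_mul _).differentiableWithinAt
  have heq : ∀ r : ℝ, 0 < r → L r = R r := by
    intro r hr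
    have h := integral_cpow_mul_exp_neg_mul_Ioi hc hr
    rw [hL]
    simp only
    rw [show (fun u : ℝ => (u : ℂ) ^ (c - 1) * Complex.exp (-(r:ℂ) * u)) =
      (fun u : ℝ => (u : ℂ) ^ (c - 1) * Complex.exp (-((r:ℂ) * u))) by funext u; rw [neg_mul]]
    rw [h, hR]
    simp only
    rw [one_div, Complex.inv_cpow _ _ (by rw [Complex.arg_ofReal_of_nonneg hr.le]; positivity),
      ← Complex.cpow_neg, mul_comm]
  have hfreq : ∃ᶠ z in nhdsWithin (1 : ℂ) {(1:ℂ)}ᶜ, L z = R z := by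
    have hseq : Tendsto (fun n : ℕ => ((1 + ((n:ℝ)+1)⁻¹ : ℝ) : ℂ)) atTop
        (nhdsWithin (1:ℂ) {(1:ℂ)}ᶜ) := by
      rw [tendsto_nhdsWithin_iff]
      constructor
      · have : Tendsto (fun n : ℕ => (1 + ((n:ℝ)+1)⁻¹ : ℝ)) atTop (nhds 1) := by
          have := tendsto_one_div_add_atTop_nhds_zero_nat (𝕜 := ℝ)
          simpa using tendsto_const_nhds.add (this.congr fun n => by rw [one_div])
        have h2 := (Complex.continuous_ofReal.tendsto 1).comp this
        simpa only [Function.comp_def, Complex.ofReal_one] using h2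
      · refine Eventually.of_forall fun n => ?_
        simp only [mem_compl_iff, mem_singleton_iff]
        intro h
        have : (1 + ((n:ℝ)+1)⁻¹ : ℝ) = 1 := by exact_mod_cast h
        have hpos : (0:ℝ) < ((n:ℝ)+1)⁻¹ := by positivity
        linarith
    refine hseq.frequently (Eventually.of_forall fun n => ?_).frequently
    exact heq _ (by positivity)
  have := AnalyticOnNhd.eqOn_of_preconnected_of_frequently_eq
    (hLd.analyticOnNhd hU) (hRd.analyticOnNhd hU)
    (convex_halfSpace_re_gt (0:ℝ)).isPreconnected (by simp [hUdef] : (1:ℂ) ∈ U) hfreq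
  exact this hw

-- elementary real inequalities
lemma b_pos {u : ℝ} (hu : 0 < u) : 0 < 1 - Real.exp (-u) := by
  have : Real.exp (-u) < 1 := Real.exp_lt_one_iff.2 (by linarith)
  linarith

lemma b_le {u : ℝ} (hu : 0 ≤ u) : 1 - Real.exp (-u) ≤ u := by
  have := Real.add_one_le_exp (-u)
  linarith

lemma b_ge {u : ℝ} (hu : 0 < u) (hu1 : u ≤ 1) : u / 3 ≤ 1 - Real.exp (-u) := by
  have h1 : u + 1 ≤ Real.exp u := Real.add_one_le_exp u
  have h3 : Real.exp (-u) * Real.exp u = 1 := by rw [← Real.exp_add]; simp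
  have h2 : Real.exp (-1 : ℝ) ≤ Real.exp (-u) := Real.exp_le_exp.2 (by linarith)
  have h4 : (3:ℝ)⁻¹ ≤ Real.exp (-1 : ℝ) := by
    rw [Real.exp_neg]
    have h5 : Real.exp 1 < 3 := lt_trans Real.exp_one_lt_d9 (by norm_num)
    exact inv_anti₀ (Real.exp_pos 1) h5.le
  have e1 : Real.exp (-u) * u ≤ Real.exp (-u) * (Real.exp u - 1) := by
    nlinarith [Real.exp_pos (-u)]
  have e2 : Real.exp (-u) * (Real.exp u - 1) = 1 - Real.exp (-u) := by
    rw [mul_sub, h3]; ring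
  have e3 : Real.exp (-1:ℝ) * u ≤ Real.exp (-u) * u :=
    mul_le_mul_of_nonneg_right h2 hu.le
  nlinarith

lemma b_cancel {u : ℝ} (hu : 0 ≤ u) : u - (1 - Real.exp (-u)) ≤ u ^ 2 := by
  have h1 : 1 + u ≤ Real.exp u := by linarith [Real.add_one_le_exp u]
  have h3 : Real.exp (-u) * Real.exp u = 1 := by rw [← Real.exp_add]; simp
  have h4 : Real.exp (-u) * (1 + u) ≤ 1 := by
    nlinarith [Real.exp_pos (-u)]
  nlinarith [mul_nonneg (mul_nonneg hu hu) hu]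

lemma rpow_anti {a t : ℝ} (ha : 0 < a) (hat : a ≤ t) {q : ℝ} (hq : q ≤ 0) : t ^ q ≤ a ^ q :=
  Real.rpow_le_rpow_of_nonpos ha hat hq

-- Lipschitz bound for x ↦ x^e on [1/3, 1]
lemma hasDerivAt_real_cpow {e : ℂ} {t : ℝ} (ht : 0 < t) :
    HasDerivAt (fun y : ℝ => (y : ℂ) ^ e) (e * (t : ℂ) ^ (e - 1)) t := by
  have h := @HasDerivAt.cpow_const _ _ _ e (hasDerivAt_id (t : ℂ))
    (Or.inl (by simpa using ht))
  simpa only [mul_one, id] using h.comp_ofReal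

lemma inv3_rpow (q : ℝ) : (3⁻¹ : ℝ) ^ q = 3 ^ (-q) := by
  rw [← Real.rpow_neg_one (3:ℝ), ← Real.rpow_mul (by norm_num : (0:ℝ) ≤ 3), neg_one_mul]

lemma cpow_sub_one_norm_le {e : ℂ} (he : e.re ≤ 1) {x : ℝ} (hx : x ∈ Icc (3⁻¹ : ℝ) 1) :
    ‖(x : ℂ) ^ e - 1‖ ≤ (‖e‖ * 3 ^ (1 - e.re)) * (1 - x) := by
  have hbd : ∀ t ∈ Icc (3⁻¹ : ℝ) 1, ‖e * (t : ℂ) ^ (e - 1)‖ ≤ ‖e‖ * 3 ^ (1 - e.re) := by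
    intro t ht
    have ht0 : (0:ℝ) < t := lt_of_lt_of_le (by norm_num) ht.1
    rw [norm_mul, Complex.norm_cpow_eq_rpow_re_of_pos ht0,
      sub_re, one_re]
    have h1 : t ^ (e.re - 1) ≤ (3⁻¹ : ℝ) ^ (e.re - 1) :=
      rpow_anti (by norm_num) ht.1 (by linarith)
    have h2 : (3⁻¹ : ℝ) ^ (e.re - 1) = 3 ^ (1 - e.re) := by rw [inv3_rpow, neg_sub]
    rw [h2] at h1
    exact mul_le_mul_of_nonneg_left h1 (norm_nonneg e)
  have key := Convex.norm_image_sub_le_of_norm_hasDerivWithin_le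
    (f := fun y : ℝ => (y : ℂ) ^ e) (f' := fun t : ℝ => e * (t : ℂ) ^ (e - 1))
    (s := Icc (3⁻¹ : ℝ) 1) (C := ‖e‖ * 3 ^ (1 - e.re)) (x := (1:ℝ)) (y := x)
    (fun t ht => (hasDerivAt_real_cpow (lt_of_lt_of_le (by norm_num) ht.1)).hasDerivWithinAt)
    hbd (convex_Icc _ _) (right_mem_Icc.2 (by norm_num)) hx
  have h1 : ((1:ℝ) : ℂ) ^ e = 1 := by rw [Complex.ofReal_one, Complex.one_cpow]
  rw [h1] at key
  calc ‖(x : ℂ) ^ e - 1‖ ≤ (‖e‖ * 3 ^ (1 - e.re)) * ‖x - 1‖ := key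
    _ = (‖e‖ * 3 ^ (1 - e.re)) * (1 - x) := by
        rw [Real.norm_eq_abs, abs_sub_comm, _root_.abs_of_nonneg (by linarith [hx.2])]

-- the comparison function and its derivative
noncomputable def fe (c : ℂ) (u : ℝ) : ℂ :=
  ((1 - Real.exp (-u) : ℝ) : ℂ) ^ (c - 1) - (u : ℂ) ^ (c - 1)

noncomputable def fd (c : ℂ) (u : ℝ) : ℂ :=
  (c - 1) * ((1 - Real.exp (-u) : ℝ) : ℂ) ^ (c - 2) * (Real.exp (-u) : ℂ)
    - (c - 1) * (u : ℂ) ^ (c - 2)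

lemma phi_mem {u : ℝ} (hu : 0 < u) (hu1 : u ≤ 1) :
    (1 - Real.exp (-u)) / u ∈ Icc (3⁻¹ : ℝ) 1 := by
  constructor
  · rw [le_div_iff₀ hu]
    have := b_ge hu hu1
    linarith
  · rw [div_le_one hu]
    exact b_le hu.le

lemma one_sub_phi_le {u : ℝ} (hu : 0 < u) :
    1 - (1 - Real.exp (-u)) / u ≤ u := by
  rw [sub_div' hu.ne', div_le_iff₀ hu]
  have := b_cancel hu.le
  nlinarith

lemma b_factor {u : ℝ} (hu : 0 < u) (e : ℂ) :
    ((1 - Real.exp (-u) : ℝ) : ℂ) ^ e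
      = (u : ℂ) ^ e * (((1 - Real.exp (-u)) / u : ℝ) : ℂ) ^ e := by
  have hbu : (0:ℝ) ≤ (1 - Real.exp (-u)) / u := div_nonneg (b_pos hu).le hu.le
  rw [show ((1 - Real.exp (-u) : ℝ) : ℂ) = ((u : ℝ) : ℂ) * (((1 - Real.exp (-u)) / u : ℝ) : ℂ) by
      rw [← Complex.ofReal_mul]; congr 1; field_simp]
  exact mul_cpow_ofReal_nonneg hu.le hbu _

lemma fe_small {c : ℂ} (hc1 : c.re < 1) {u : ℝ} (hu : 0 < u) (hu1 : u ≤ 1) :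
    ‖fe c u‖ ≤ (‖c - 1‖ * 3 ^ (2 - c.re)) * u ^ c.re := by
  set φ : ℝ := (1 - Real.exp (-u)) / u with hφ
  have hφmem := phi_mem hu hu1
  have h1 : fe c u = (u : ℂ) ^ (c - 1) * ((φ : ℝ) ^ (c - 1) - 1) := by
    rw [fe, b_factor hu]; ring
  rw [h1, norm_mul,
    Complex.norm_cpow_eq_rpow_re_of_pos hu, sub_re, one_re]
  have h2 : ‖((φ : ℝ) : ℂ) ^ (c - 1) - 1‖ ≤ (‖c - 1‖ * 3 ^ (1 - (c-1).re)) * (1 - φ) :=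
    cpow_sub_one_norm_le (by rw [sub_re, one_re]; linarith) hφmem
  have h3 : (1 : ℝ) - φ ≤ u := one_sub_phi_le hu
  have h4 : (1 - (c-1).re) = 2 - c.re := by rw [sub_re, one_re]; ring
  rw [h4] at h2
  calc u ^ (c.re - 1) * ‖((φ : ℝ) : ℂ) ^ (c - 1) - 1‖
      ≤ u ^ (c.re - 1) * ((‖c - 1‖ * 3 ^ (2 - c.re)) * u) := by
        apply mul_le_mul_of_nonneg_left _ (Real.rpow_nonneg hu.le _)
        refine le_trans h2 ?_
        apply mul_le_mul_of_nonneg_left h3 (by positivity)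
    _ = (‖c - 1‖ * 3 ^ (2 - c.re)) * u ^ c.re := by
        rw [show c.re = (c.re - 1) + 1 by ring, Real.rpow_add hu, Real.rpow_one]; ring

lemma fd_small {c : ℂ} (hc1 : c.re < 1) {u : ℝ} (hu : 0 < u) (hu1 : u ≤ 1) :
    ‖fd c u‖ ≤ (‖c - 1‖ * (3 ^ (2 - c.re) + ‖c - 2‖ * 3 ^ (3 - c.re))) * u ^ (c.re - 1) := by
  set φ : ℝ := (1 - Real.exp (-u)) / u with hφ
  have hφmem := phi_mem hu hu1
  have h1 : fd c u = (c - 1) * ((u : ℂ) ^ (c - 2) *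
      (((φ : ℝ) : ℂ) ^ (c - 2) * (Real.exp (-u) : ℂ) - 1)) := by
    rw [fd, b_factor hu]; ring
  have h2re : (c - 2 : ℂ).re = c.re - 2 := by simp [Complex.sub_re]
  rw [h1, norm_mul, norm_mul,
    Complex.norm_cpow_eq_rpow_re_of_pos hu, h2re]
  have hφ0 : (0:ℝ) < φ := lt_of_lt_of_le (by norm_num) hφmem.1
  have hφnorm : ‖((φ : ℝ) : ℂ) ^ (c - 2)‖ ≤ 3 ^ (2 - c.re) := by
    rw [Complex.norm_cpow_eq_rpow_re_of_pos hφ0, h2re]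
    have h := rpow_anti (show (0:ℝ) < 3⁻¹ by norm_num) hφmem.1
      (show c.re - 2 ≤ 0 by linarith)
    refine le_trans h (le_of_eq ?_)
    rw [inv3_rpow, neg_sub]
  have hexp1 : |Real.exp (-u) - 1| ≤ u := by
    rw [abs_sub_comm, _root_.abs_of_nonneg (by linarith [b_pos hu])]
    linarith [b_le hu.le]
  have key : ‖((φ : ℝ) : ℂ) ^ (c - 2) * (Real.exp (-u) : ℂ) - 1‖
      ≤ (3 ^ (2 - c.re) + ‖c - 2‖ * 3 ^ (3 - c.re)) * u := by
    have split : ((φ : ℝ) : ℂ) ^ (c - 2) * (Real.exp (-u) : ℂ) - 1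
        = ((φ : ℝ) : ℂ) ^ (c - 2) * ((Real.exp (-u) : ℂ) - 1) + (((φ : ℝ) : ℂ) ^ (c - 2) - 1) := by
      ring
    rw [split]
    refine le_trans (norm_add_le _ _) ?_
    have t1 : ‖((φ : ℝ) : ℂ) ^ (c - 2) * ((Real.exp (-u) : ℂ) - 1)‖ ≤ 3 ^ (2 - c.re) * u := by
      rw [norm_mul]
      have : ‖(Real.exp (-u) : ℂ) - 1‖ ≤ u := by
        rw [show ((Real.exp (-u) : ℝ) : ℂ) - 1 = ((Real.exp (-u) - 1 : ℝ) : ℂ) by push_cast; ring,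
          Complex.norm_real, Real.norm_eq_abs]
        exact hexp1
      exact mul_le_mul hφnorm this (norm_nonneg _) (by positivity)
    have t2 : ‖((φ : ℝ) : ℂ) ^ (c - 2) - 1‖ ≤ (‖c - 2‖ * 3 ^ (3 - c.re)) * u := by
      have h := cpow_sub_one_norm_le (e := c - 2) (by rw [h2re]; linarith) hφmem
      have h4 : (1 - (c-2:ℂ).re) = 3 - c.re := by rw [h2re]; ring
      rw [h4] at h
      refine le_trans h ?_
      exact mul_le_mul_of_nonneg_left (one_sub_phi_le hu) (by positivity)
    linarith [t1, t2]
  calc ‖c - 1‖ * (u ^ (c.re - 2) * ‖((φ : ℝ) : ℂ) ^ (c - 2) * (Real.exp (-u) : ℂ) - 1‖)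
      ≤ ‖c - 1‖ * (u ^ (c.re - 2) * ((3 ^ (2 - c.re) + ‖c - 2‖ * 3 ^ (3 - c.re)) * u)) := by
        apply mul_le_mul_of_nonneg_left _ (norm_nonneg _)
        exact mul_le_mul_of_nonneg_left key (Real.rpow_nonneg hu.le _)
    _ = (‖c - 1‖ * (3 ^ (2 - c.re) + ‖c - 2‖ * 3 ^ (3 - c.re))) * u ^ (c.re - 1) := by
        rw [show c.re - 1 = (c.re - 2) + 1 by ring, Real.rpow_add hu, Real.rpow_one]
        ring

-- large-u bounds
lemma b_one_le {u : ℝ} (hu : 1 ≤ u) : 1 - Real.exp (-1 : ℝ) ≤ 1 - Real.exp (-u) := by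
  have : Real.exp (-u) ≤ Real.exp (-1 : ℝ) := Real.exp_le_exp.2 (by linarith)
  linarith

lemma fe_big {c : ℂ} (hc1 : c.re < 1) {u : ℝ} (hu : 1 ≤ u) :
    ‖fe c u‖ ≤ (1 - Real.exp (-1 : ℝ)) ^ (c.re - 1) + 1 := by
  have hu0 : (0:ℝ) < u := by linarith
  have hb0 : (0:ℝ) < 1 - Real.exp (-1 : ℝ) := b_pos one_pos
  refine le_trans (norm_sub_le _ _) ?_
  have h1 : ‖((1 - Real.exp (-u) : ℝ) : ℂ) ^ (c - 1)‖ ≤ (1 - Real.exp (-1:ℝ)) ^ (c.re - 1) := by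
    rw [Complex.norm_cpow_eq_rpow_re_of_pos (b_pos hu0), Complex.sub_re,
      Complex.one_re]
    exact rpow_anti hb0 (b_one_le hu) (by linarith)
  have h2 : ‖(u : ℂ) ^ (c - 1)‖ ≤ 1 := by
    rw [Complex.norm_cpow_eq_rpow_re_of_pos hu0, Complex.sub_re,
      Complex.one_re]
    calc u ^ (c.re - 1) ≤ (1:ℝ) ^ (c.re - 1) := rpow_anti one_pos hu (by linarith)
      _ = 1 := Real.one_rpow _
  linarith

lemma fd_big {c : ℂ} (hc1 : c.re < 1) {u : ℝ} (hu : 1 ≤ u) :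
    ‖fd c u‖ ≤ ‖c - 1‖ * ((1 - Real.exp (-1 : ℝ)) ^ (c.re - 2) + 1) := by
  have hu0 : (0:ℝ) < u := by linarith
  have hb0 : (0:ℝ) < 1 - Real.exp (-1 : ℝ) := b_pos one_pos
  have h2re : (c - 2 : ℂ).re = c.re - 2 := by simp [Complex.sub_re]
  refine le_trans (norm_sub_le _ _) ?_
  have h1 : ‖(c - 1) * ((1 - Real.exp (-u) : ℝ) : ℂ) ^ (c - 2) * (Real.exp (-u) : ℂ)‖
      ≤ ‖c - 1‖ * (1 - Real.exp (-1:ℝ)) ^ (c.re - 2) := by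
    rw [norm_mul, norm_mul]
    have hb : ‖((1 - Real.exp (-u) : ℝ) : ℂ) ^ (c - 2)‖ ≤ (1 - Real.exp (-1:ℝ)) ^ (c.re - 2) := by
      rw [Complex.norm_cpow_eq_rpow_re_of_pos (b_pos hu0), h2re]
      exact rpow_anti hb0 (b_one_le hu) (by linarith)
    have he : ‖((Real.exp (-u) : ℝ) : ℂ)‖ ≤ 1 := by
      rw [Complex.norm_real, Real.norm_eq_abs, _root_.abs_of_pos (Real.exp_pos _)]
      exact Real.exp_le_one_iff.2 (by linarith)
    calc ‖c - 1‖ * ‖((1 - Real.exp (-u) : ℝ) : ℂ) ^ (c - 2)‖ * ‖((Real.exp (-u) : ℝ) : ℂ)‖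
        ≤ ‖c - 1‖ * (1 - Real.exp (-1:ℝ)) ^ (c.re - 2) * 1 := by
          apply mul_le_mul (mul_le_mul_of_nonneg_left hb (norm_nonneg _)) he (norm_nonneg _)
          positivity
      _ = ‖c - 1‖ * (1 - Real.exp (-1:ℝ)) ^ (c.re - 2) := mul_one _
  have h2 : ‖(c - 1) * (u : ℂ) ^ (c - 2)‖ ≤ ‖c - 1‖ * 1 := by
    rw [norm_mul]
    apply mul_le_mul_of_nonneg_left _ (norm_nonneg _)
    rw [Complex.norm_cpow_eq_rpow_re_of_pos hu0, h2re]
    calc u ^ (c.re - 2) ≤ (1:ℝ) ^ (c.re - 2) := rpow_anti one_pos hu (by linarith)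
      _ = 1 := Real.one_rpow _
  calc ‖(c-1) * ((1 - Real.exp (-u) : ℝ) : ℂ) ^ (c - 2) * (Real.exp (-u) : ℂ)‖
        + ‖(c-1) * (u : ℂ) ^ (c - 2)‖
      ≤ ‖c - 1‖ * (1 - Real.exp (-1:ℝ)) ^ (c.re - 2) + ‖c - 1‖ * 1 := by linarith
    _ = ‖c - 1‖ * ((1 - Real.exp (-1 : ℝ)) ^ (c.re - 2) + 1) := by ring

-- master bounds
lemma master_of_bounds {g : ℝ → ℂ} {ρ K1 K3 : ℝ} (hρ : 0 < ρ) (hK1 : 0 ≤ K1) (hK3 : 0 ≤ K3)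
    (hsmall : ∀ u : ℝ, 0 < u → u ≤ 1 → ‖g u‖ ≤ K1 * u ^ (ρ - 1))
    (hbig : ∀ u : ℝ, 1 ≤ u → ‖g u‖ ≤ K3) :
    ∀ u : ℝ, 0 < u → ‖g u‖ ≤ (K1 + K3) * (u ^ (ρ - 1) + 1) := by
  intro u hu
  have hrnn : (0:ℝ) ≤ u ^ (ρ - 1) := Real.rpow_nonneg hu.le _
  rcases le_or_gt u 1 with h1 | h1
  · have h := hsmall u hu h1
    nlinarith [mul_nonneg hK3 hrnn]
  · have h := hbig u h1.le
    nlinarith [mul_nonneg (add_nonneg hK1 hK3) hrnn]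

lemma fe_master {c : ℂ} (hc0 : 0 < c.re) (hc1 : c.re < 1) :
    ∃ C : ℝ, 0 ≤ C ∧ ∀ u : ℝ, 0 < u → ‖fe c u‖ ≤ C * (u ^ (c.re - 1) + 1) := by
  have hb0 : (0:ℝ) ≤ (1 - Real.exp (-1:ℝ)) ^ (c.re - 1) := Real.rpow_nonneg (b_pos one_pos).le _
  have hK1 : (0:ℝ) ≤ ‖c - 1‖ * 3 ^ (2 - c.re) := by positivity
  refine ⟨‖c - 1‖ * 3 ^ (2 - c.re) + ((1 - Real.exp (-1:ℝ)) ^ (c.re - 1) + 1),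
    by linarith, ?_⟩
  refine master_of_bounds hc0 hK1 (by linarith) (fun u hu hu1 => ?_) (fun u hu => fe_big hc1 hu)
  have h := fe_small hc1 hu hu1
  have h2 : u ^ c.re ≤ u ^ (c.re - 1) :=
    Real.rpow_le_rpow_of_exponent_ge hu hu1 (by linarith)
  calc ‖fe c u‖ ≤ (‖c - 1‖ * 3 ^ (2 - c.re)) * u ^ c.re := h
    _ ≤ (‖c - 1‖ * 3 ^ (2 - c.re)) * u ^ (c.re - 1) := mul_le_mul_of_nonneg_left h2 hK1

lemma fd_master {c : ℂ} (hc0 : 0 < c.re) (hc1 : c.re < 1) :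
    ∃ C : ℝ, 0 ≤ C ∧ ∀ u : ℝ, 0 < u → ‖fd c u‖ ≤ C * (u ^ (c.re - 1) + 1) := by
  have hb0 : (0:ℝ) ≤ (1 - Real.exp (-1:ℝ)) ^ (c.re - 2) := Real.rpow_nonneg (b_pos one_pos).le _
  have hK1 : (0:ℝ) ≤ ‖c - 1‖ * (3 ^ (2 - c.re) + ‖c - 2‖ * 3 ^ (3 - c.re)) := by positivity
  have hK3 : (0:ℝ) ≤ ‖c - 1‖ * ((1 - Real.exp (-1:ℝ)) ^ (c.re - 2) + 1) := by
    apply mul_nonneg (norm_nonneg _); linarith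
  refine ⟨‖c - 1‖ * (3 ^ (2 - c.re) + ‖c - 2‖ * 3 ^ (3 - c.re))
      + ‖c - 1‖ * ((1 - Real.exp (-1:ℝ)) ^ (c.re - 2) + 1), by linarith, ?_⟩
  exact master_of_bounds hc0 hK1 hK3 (fun u hu hu1 => fd_small hc1 hu hu1)
    (fun u hu => fd_big hc1 hu)

-- derivative of fe
lemma fe_hasDerivAt (c : ℂ) {u : ℝ} (hu : 0 < u) : HasDerivAt (fe c) (fd c u) u := by
  have hb : (0:ℝ) < 1 - Real.exp (-u) := b_pos hu
  have d1r : HasDerivAt (fun u : ℝ => 1 - Real.exp (-u)) (Real.exp (-u)) u := by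
    have h := ((hasDerivAt_id u).neg).exp
    simpa using h.const_sub 1
  have d1c : HasDerivAt (fun u : ℝ => ((1 - Real.exp (-u) : ℝ) : ℂ)) ((Real.exp (-u) : ℝ) : ℂ) u :=
    d1r.ofReal_comp
  have d1 : HasDerivAt (fun u : ℝ => ((1 - Real.exp (-u) : ℝ) : ℂ) ^ (c - 1))
      ((c - 1) * ((1 - Real.exp (-u) : ℝ) : ℂ) ^ (c - 2) * ((Real.exp (-u) : ℝ) : ℂ)) u := by
    have houter := hasDerivAt_real_cpow (e := c - 1) hb
    have h2 := houter.scomp u d1r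
    simp only [Function.comp_def] at h2
    refine h2.congr_deriv ?_
    rw [Complex.real_smul, show c - 1 - 1 = c - 2 by ring]
    ring
  have d2 : HasDerivAt (fun u : ℝ => (u : ℂ) ^ (c - 1)) ((c - 1) * (u : ℂ) ^ (c - 2)) u := by
    have h := hasDerivAt_real_cpow (e := c - 1) hu
    simpa [show c - 1 - 1 = c - 2 by ring] using h
  exact d1.sub d2

lemma cexp_hasDerivAt (w : ℂ) (u : ℝ) :
    HasDerivAt (fun u : ℝ => Complex.exp (-w * u)) (Complex.exp (-w * u) * (-w)) u := by
  have h0 : HasDerivAt (fun u : ℝ => ((u:ℝ) : ℂ)) 1 u := by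
    simpa using (hasDerivAt_id u).ofReal_comp
  have h1 : HasDerivAt (fun u : ℝ => -w * ((u:ℝ):ℂ)) (-w) u := by
    simpa using h0.const_mul (-w)
  exact h1.cexp

lemma fe_contOn (c : ℂ) : ContinuousOn (fe c) (Ioi 0) := fun u hu =>
  (fe_hasDerivAt c hu).continuousAt.continuousWithinAt

lemma fd_contOn (c : ℂ) : ContinuousOn (fd c) (Ioi 0) := by
  intro u hu
  have hb : (0:ℝ) < 1 - Real.exp (-u) := b_pos hu
  have hinner : ContinuousAt (fun u : ℝ => ((1 - Real.exp (-u) : ℝ) : ℂ)) u :=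
    (Complex.continuous_ofReal.comp
      (continuous_const.sub (Real.continuous_exp.comp continuous_neg))).continuousAt
  have h1 : ContinuousAt (fun u : ℝ => ((1 - Real.exp (-u) : ℝ) : ℂ) ^ (c - 2)) u :=
    (continuousAt_cpow_const (Or.inl (by simp only [Complex.ofReal_re]; exact hb))).comp hinner
  have h2 : ContinuousAt (fun u : ℝ => ((Real.exp (-u) : ℝ) : ℂ)) u :=
    (Complex.continuous_ofReal.comp (Real.continuous_exp.comp continuous_neg)).continuousAt
  have h3 : ContinuousAt (fun u : ℝ => (u : ℂ) ^ (c - 2)) u :=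
    Complex.continuousAt_ofReal_cpow_const u _ (Or.inr (ne_of_gt hu))
  exact (((continuousAt_const.mul h1).mul h2).sub (continuousAt_const.mul h3)).continuousWithinAt

-- integrability of cexp(-wu) * g u for g ∈ {fe, fd}
lemma integrable_cexp_mul {c : ℂ} {g : ℝ → ℂ} (hgc : ContinuousOn g (Ioi 0)) {C : ℝ}
    (hC : ∀ u : ℝ, 0 < u → ‖g u‖ ≤ C * (u ^ (c.re - 1) + 1)) (hc0 : 0 < c.re)
    {w : ℂ} (hw : 0 < w.re) :
    IntegrableOn (fun u : ℝ => Complex.exp (-w * u) * g u) (Ioi 0) := by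
  have hmeas : AEStronglyMeasurable (fun u : ℝ => Complex.exp (-w * u) * g u)
      (volume.restrict (Ioi 0)) := by
    refine ContinuousOn.aestronglyMeasurable ?_ measurableSet_Ioi
    exact ((Complex.continuous_exp.comp (continuous_const.mul
      Complex.continuous_ofReal)).continuousOn).mul hgc
  refine Integrable.mono' ((integrable_master hc0 hw).const_mul C) hmeas ?_
  filter_upwards [ae_restrict_mem measurableSet_Ioi] with u hu
  rw [norm_mul, norm_cexp_neg_mul]
  calc Real.exp (-w.re * u) * ‖g u‖ ≤ Real.exp (-w.re * u) * (C * (u ^ (c.re - 1) + 1)) := by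
        exact mul_le_mul_of_nonneg_left (hC u hu) (Real.exp_nonneg _)
    _ = C * (Real.exp (-w.re * u) * (u ^ (c.re - 1) + 1)) := by ring

lemma fe_zero {c : ℂ} (hc1 : c.re < 1) : fe c 0 = 0 := by
  have hc : c - 1 ≠ 0 := by
    intro h
    have : c = 1 := by linear_combination h
    rw [this] at hc1; simp at hc1
  simp [fe, Complex.zero_cpow hc]

lemma ibp {c : ℂ} (hc0 : 0 < c.re) (hc1 : c.re < 1) {w : ℂ} (hw : 0 < w.re) :
    ∫ u in Ioi (0:ℝ), Complex.exp (-w * u) * fe c u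
      = w⁻¹ * ∫ u in Ioi (0:ℝ), Complex.exp (-w * u) * fd c u := by
  obtain ⟨Cf, hCf0, hCf⟩ := fe_master hc0 hc1
  obtain ⟨Cd, hCd0, hCd⟩ := fd_master hc0 hc1
  have hw0 : w ≠ 0 := fun h => by rw [h] at hw; simp at hw
  set G : ℝ → ℂ := fun u => Complex.exp (-w * u) * fe c u with hG
  set G' : ℝ → ℂ := fun u => Complex.exp (-w * u) * fd c u - w * (Complex.exp (-w * u) * fe c u)
    with hG'
  have hint_fe := integrable_cexp_mul (fe_contOn c) hCf hc0 hw
  have hint_fd := integrable_cexp_mul (fd_contOn c) hCd hc0 hw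
  have hG0 : G 0 = 0 := by
    rw [hG]
    simp [fe_zero hc1]
  have hcont : ContinuousWithinAt G (Ici 0) 0 := by
    have h0 : G 0 = 0 := hG0
    rw [ContinuousWithinAt, h0]
    apply squeeze_zero_norm'
    · have h1 : ∀ᶠ u : ℝ in nhdsWithin 0 (Ici 0), u ∈ Ici (0:ℝ) := self_mem_nhdsWithin
      have h2 : ∀ᶠ u : ℝ in nhdsWithin 0 (Ici 0), u < 1 :=
        eventually_nhdsWithin_of_eventually_nhds (eventually_lt_nhds zero_lt_one)
      filter_upwards [h1, h2] with u hu hu1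
      show ‖G u‖ ≤ (‖c - 1‖ * 3 ^ (2 - c.re)) * |u| ^ c.re
      rcases eq_or_lt_of_le (mem_Ici.mp hu) with h | h
      · rw [← h, hG0]
        simp
        positivity
      · rw [hG, norm_mul, norm_cexp_neg_mul, _root_.abs_of_pos h]
        calc Real.exp (-w.re * u) * ‖fe c u‖ ≤ 1 * ((‖c - 1‖ * 3 ^ (2 - c.re)) * u ^ c.re) := by
              apply mul_le_mul _ (fe_small hc1 h hu1.le) (norm_nonneg _) zero_le_one
              rw [Real.exp_le_one_iff]
              nlinarith [hw, h]
          _ = (‖c - 1‖ * 3 ^ (2 - c.re)) * u ^ c.re := one_mul _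
    · have hcont : ContinuousAt (fun u : ℝ => (‖c - 1‖ * 3 ^ (2 - c.re)) * |u| ^ c.re) 0 := by
        apply ContinuousAt.mul continuousAt_const
        exact (Real.continuousAt_rpow_const _ _ (Or.inr hc0.le)).comp
          continuous_abs.continuousAt
      have := hcont.tendsto.mono_left (nhdsWithin_le_nhds (s := Ici (0:ℝ)))
      simpa [Real.zero_rpow hc0.ne'] using this
  have hderiv : ∀ u ∈ Ioi (0:ℝ), HasDerivAt G (G' u) u := by
    intro u hu
    have h := (cexp_hasDerivAt w u).mul (fe_hasDerivAt c hu)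
    have heq : Complex.exp (-w * ↑u) * (-w) * fe c u + Complex.exp (-w * ↑u) * fd c u = G' u := by
      rw [hG']; ring
    exact heq ▸ h
  have hint_G' : IntegrableOn G' (Ioi 0) := hint_fd.sub (hint_fe.const_mul w)
  have htop : Tendsto G atTop (nhds 0) := by
    apply squeeze_zero_norm'
      (a := fun u : ℝ => ((1 - Real.exp (-1 : ℝ)) ^ (c.re - 1) + 1) * Real.exp (-(w.re * u)))
    · filter_upwards [eventually_ge_atTop (1:ℝ)] with u hu
      show ‖Complex.exp (-w * u) * fe c u‖
        ≤ ((1 - Real.exp (-1 : ℝ)) ^ (c.re - 1) + 1) * Real.exp (-(w.re * u))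
      rw [norm_mul, norm_cexp_neg_mul, mul_comm, neg_mul]
      exact mul_le_mul_of_nonneg_right (fe_big hc1 hu) (Real.exp_nonneg _)
    · have h2 : Tendsto (fun u : ℝ => w.re * u) atTop atTop := tendsto_id.const_mul_atTop hw
      have h1 := Real.tendsto_exp_neg_atTop_nhds_zero.comp h2
      simpa [Function.comp] using
        h1.const_mul ((1 - Real.exp (-1 : ℝ)) ^ (c.re - 1) + 1)
  have key := integral_Ioi_of_hasDerivAt_of_tendsto hcont hderiv hint_G' htop
  rw [hG0, sub_zero] at key
  have split : ∫ u in Ioi (0:ℝ), G' u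
      = (∫ u in Ioi (0:ℝ), Complex.exp (-w * u) * fd c u)
        - w * ∫ u in Ioi (0:ℝ), Complex.exp (-w * u) * fe c u := by
    rw [hG']
    rw [integral_sub hint_fd (hint_fe.const_mul w), integral_const_mul]
  rw [split] at key
  have : (∫ u in Ioi (0:ℝ), Complex.exp (-w * u) * fd c u)
      = w * ∫ u in Ioi (0:ℝ), Complex.exp (-w * u) * fe c u := by
    linear_combination key
  rw [this, inv_mul_cancel_left₀ hw0]

lemma E_bound {c : ℂ} (hc0 : 0 < c.re) (hc1 : c.re < 1) {σ : ℝ} (hσ : 0 < σ) :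
    ∃ D : ℝ, 0 ≤ D ∧ ∀ w : ℂ, w.re = σ →
      ‖∫ u in Ioi (0:ℝ), Complex.exp (-w * u) * fe c u‖ ≤ D / ‖w‖ := by
  obtain ⟨Cd, hCd0, hCd⟩ := fd_master hc0 hc1
  refine ⟨Cd * ∫ u in Ioi (0:ℝ), Real.exp (-σ * u) * (u ^ (c.re - 1) + 1), ?_, ?_⟩
  · apply mul_nonneg hCd0
    apply setIntegral_nonneg measurableSet_Ioi
    intro u hu
    have h1 : (0:ℝ) ≤ Real.exp (-σ * u) := Real.exp_nonneg _
    have h2 : (0:ℝ) ≤ u ^ (c.re - 1) := Real.rpow_nonneg (le_of_lt hu) _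
    nlinarith
  intro w hwre
  have hw : 0 < w.re := by rw [hwre]; exact hσ
  have hw0 : w ≠ 0 := fun h => by rw [h] at hw; simp at hw
  rw [ibp hc0 hc1 hw, norm_mul, norm_inv]
  have hbound : ‖∫ u in Ioi (0:ℝ), Complex.exp (-w * u) * fd c u‖
      ≤ Cd * ∫ u in Ioi (0:ℝ), Real.exp (-σ * u) * (u ^ (c.re - 1) + 1) := by
    rw [← integral_const_mul]
    apply norm_integral_le_of_norm_le ((integrable_master hc0 hσ).const_mul Cd)
    filter_upwards [ae_restrict_mem measurableSet_Ioi] with u hu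
    rw [norm_mul, norm_cexp_neg_mul, hwre]
    calc Real.exp (-σ * u) * ‖fd c u‖ ≤ Real.exp (-σ * u) * (Cd * (u ^ (c.re - 1) + 1)) :=
          mul_le_mul_of_nonneg_left (hCd u hu) (Real.exp_nonneg _)
      _ = Cd * (Real.exp (-σ * u) * (u ^ (c.re - 1) + 1)) := by ring
  rw [div_eq_inv_mul]
  exact mul_le_mul_of_nonneg_left hbound (by positivity)

-- substitution x = exp(-u) in the Beta integral
lemma exp_image : (fun u : ℝ => Real.exp (-u)) '' (Ioi 0) = Ioo 0 1 := by
  ext x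
  constructor
  · rintro ⟨u, hu, rfl⟩
    exact ⟨Real.exp_pos _, Real.exp_lt_one_iff.2 (by simpa using hu)⟩
  · rintro ⟨hx0, hx1⟩
    refine ⟨-Real.log x, ?_, ?_⟩
    · simpa using Real.log_neg hx0 hx1
    · show Real.exp (-(-Real.log x)) = x
      rw [neg_neg, Real.exp_log hx0]

lemma beta_eq {c : ℂ} (hc : 0 < c.re) {w : ℂ} (hw : 0 < w.re) :
    betaIntegral w c
      = ∫ u in Ioi (0:ℝ), Complex.exp (-w * u) * ((1 - Real.exp (-u) : ℝ) : ℂ) ^ (c - 1) := by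
  rw [betaIntegral, intervalIntegral.integral_of_le zero_le_one, integral_Ioc_eq_integral_Ioo,
    ← exp_image]
  have hderiv : ∀ u ∈ Ioi (0:ℝ),
      HasDerivWithinAt (fun u : ℝ => Real.exp (-u)) (-Real.exp (-u)) (Ioi 0) u := by
    intro u _
    have h := ((hasDerivAt_id u).neg).exp
    simpa using h.hasDerivWithinAt
  have hinj : InjOn (fun u : ℝ => Real.exp (-u)) (Ioi 0) := by
    intro a _ b _ h
    simpa using Real.exp_injective h
  rw [integral_image_eq_integral_abs_deriv_smul measurableSet_Ioi hderiv hinj]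
  refine setIntegral_congr_fun measurableSet_Ioi (fun u hu => ?_)
  have hu0 : (0:ℝ) < u := hu
  have h1 : ((Real.exp (-u) : ℝ) : ℂ) = Complex.exp (-(u:ℂ)) := by
    rw [Complex.ofReal_exp, Complex.ofReal_neg]
  have h2 : ((Real.exp (-u) : ℝ) : ℂ) ^ (w - 1) = Complex.exp (-(u:ℂ) * (w - 1)) := by
    rw [h1, Complex.cpow_def_of_ne_zero (Complex.exp_ne_zero _), Complex.log_exp]
    · simp [Real.pi_pos]
    · simp [Real.pi_nonneg]
  show |(-Real.exp (-u))| •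
      (((Real.exp (-u) : ℝ) : ℂ) ^ (w - 1) * (1 - ((Real.exp (-u) : ℝ) : ℂ)) ^ (c - 1))
      = Complex.exp (-w * u) * ((1 - Real.exp (-u) : ℝ) : ℂ) ^ (c - 1)
  rw [abs_neg, _root_.abs_of_pos (Real.exp_pos _), h2,
    show (1 - ((Real.exp (-u) : ℝ) : ℂ)) = ((1 - Real.exp (-u) : ℝ) : ℂ) by push_cast; ring,
    Complex.real_smul, h1, ← mul_assoc, ← Complex.exp_add,
    show -(u:ℂ) + -(u:ℂ) * (w - 1) = -w * u by ring]

-- splitting of the beta integral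
lemma beta_split {c : ℂ} (hc0 : 0 < c.re) (hc1 : c.re < 1) {w : ℂ} (hw : 0 < w.re) :
    betaIntegral w c = Gamma c * w ^ (-c)
      + ∫ u in Ioi (0:ℝ), Complex.exp (-w * u) * fe c u := by
  obtain ⟨Cf, hCf0, hCf⟩ := fe_master hc0 hc1
  have h1 : betaIntegral w c
      = ∫ u in Ioi (0:ℝ), ((u : ℂ) ^ (c - 1) * Complex.exp (-w * u)
          + Complex.exp (-w * u) * fe c u) := by
    rw [beta_eq hc0 hw]
    refine setIntegral_congr_fun measurableSet_Ioi (fun u hu => ?_)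
    rw [fe]
    ring
  rw [h1, integral_add (laplace_integrable hc0 hw)
    (integrable_cexp_mul (fe_contOn c) hCf hc0 hw), laplace_eq hc0 hw]

lemma It_ne_zero {t : ℝ} (ht : 0 < t) : I * (t : ℂ) ≠ 0 := by
  simp [Complex.ext_iff, ht.ne']

lemma arg_It {t : ℝ} (ht : 0 < t) : (I * (t : ℂ)).arg = Real.pi / 2 := by
  rw [Complex.arg_eq_pi_div_two_iff]
  constructor <;> simp [ht]

lemma log_It {t : ℝ} (ht : 0 < t) :
    Complex.log (I * t) = Real.log t + (Real.pi / 2 : ℝ) * I := by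
  rw [Complex.log]
  congr 1
  · congr 1
    rw [norm_mul, Complex.norm_I, Complex.norm_real, Real.norm_eq_abs, one_mul, _root_.abs_of_pos ht]
  · rw [arg_It ht, Complex.ofReal_div, Complex.ofReal_ofNat]

lemma abs_It {t : ℝ} (ht : 0 < t) : ‖I * (t : ℂ)‖ = t := by
  rw [norm_mul, Complex.norm_I, Complex.norm_real, Real.norm_eq_abs, one_mul, _root_.abs_of_pos ht]

lemma ratio_tendsto (z : ℂ) :
    Tendsto (fun t : ℝ => (z + I * t) / (I * t)) atTop (nhds 1) := by
  have h1 : Tendsto (fun t : ℝ => z * (I * t)⁻¹) atTop (nhds 0) := by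
    apply squeeze_zero_norm' (a := fun t : ℝ => ‖z‖ * t⁻¹)
    · filter_upwards [eventually_gt_atTop (0:ℝ)] with t ht
      rw [norm_mul, norm_inv, abs_It ht]
    · simpa using tendsto_inv_atTop_zero.const_mul ‖z‖
  have h2 := h1.const_add (1 : ℂ)
  rw [add_zero] at h2
  apply h2.congr'
  filter_upwards [eventually_gt_atTop (0:ℝ)] with t ht
  field_simp [It_ne_zero ht, Complex.ofReal_ne_zero.2 ht.ne']
  ring

lemma cpow_ratio_tendsto (z c : ℂ) :
    Tendsto (fun t : ℝ => (z + I * t) ^ (-c) * (I * (t:ℂ)) ^ c) atTop (nhds 1) := by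
  have hr := ratio_tendsto z
  have hlog : Tendsto (fun t : ℝ => Complex.log ((z + I * t) / (I * t))) atTop (nhds 0) := by
    have hc := (continuousAt_clog (by simp : (1:ℂ) ∈ Complex.slitPlane)).tendsto
    rw [Complex.log_one] at hc
    exact hc.comp hr
  have hmain : Tendsto (fun t : ℝ => Complex.exp (-c * Complex.log ((z + I * t) / (I * t))))
      atTop (nhds 1) := by
    have h0 : Tendsto (fun t : ℝ => -c * Complex.log ((z + I * t) / (I * t))) atTop
        (nhds 0) := by simpa using hlog.const_mul (-c)
    have := (Complex.continuous_exp.tendsto 0).comp h0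
    simpa [Complex.exp_zero, Function.comp_def] using this
  apply hmain.congr'
  have hre : Tendsto (fun t : ℝ => ((z + I * t) / (I * t)).re) atTop (nhds 1) := by
    have := (Complex.continuous_re.tendsto 1).comp hr
    simpa [Function.comp_def] using this
  filter_upwards [eventually_gt_atTop (0:ℝ),
    hre.eventually_const_lt (by norm_num : (1:ℝ)/2 < 1)] with t ht hret
  set r : ℂ := (z + I * t) / (I * t) with hrdef
  have hIt : I * (t:ℂ) ≠ 0 := It_ne_zero ht
  have hrne : r ≠ 0 := by
    intro h
    rw [h] at hret
    simp at hret
    linarith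
  have hwne : z + I * t ≠ 0 := by
    intro h
    apply hrne
    rw [hrdef, h, zero_div]
  have hfactor : z + I * (t:ℂ) = (I * t) * r := by
    rw [hrdef]
    field_simp [Complex.ofReal_ne_zero.2 ht.ne']
  have hargr : |r.arg| < Real.pi / 2 :=
    Complex.abs_arg_lt_pi_div_two_iff.2 (Or.inl (by linarith))
  have habs := abs_lt.1 hargr
  have hlogmul : Complex.log (z + I * t) = Complex.log (I * t) + Complex.log r := by
    rw [hfactor]
    apply Complex.log_mul hIt hrne
    rw [arg_It ht]
    constructor
    · linarith [Real.pi_pos]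
    · linarith
  rw [Complex.cpow_def_of_ne_zero hwne, Complex.cpow_def_of_ne_zero hIt, ← Complex.exp_add,
    hlogmul]
  congr 1
  ring

lemma beta_tendsto {c : ℂ} (hc0 : 0 < c.re) (hc1 : c.re < 1) {z : ℂ} (hz : 0 < z.re) :
    Tendsto (fun t : ℝ => betaIntegral (z + I * t) c * (I * (t:ℂ)) ^ c) atTop
      (nhds (Gamma c)) := by
  have hwre : ∀ t : ℝ, (z + I * (t:ℂ)).re = z.re := by
    intro t
    simp
  obtain ⟨D, hD0, hD⟩ := E_bound hc0 hc1 hz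
  have hlim1 : Tendsto (fun t : ℝ => Gamma c * ((z + I * t) ^ (-c) * (I * (t:ℂ)) ^ c)) atTop
      (nhds (Gamma c)) := by
    have := (cpow_ratio_tendsto z c).const_mul (Gamma c)
    simpa using this
  set M : ℝ := (Real.exp (Real.pi / 2 * c.im))⁻¹ with hM
  have hM0 : 0 ≤ M := by positivity
  have hlim2 : Tendsto (fun t : ℝ =>
      (∫ u in Ioi (0:ℝ), Complex.exp (-(z + I * t) * u) * fe c u) * (I * (t:ℂ)) ^ c) atTop
      (nhds 0) := by
    apply squeeze_zero_norm' (a := fun t : ℝ => (2 * D * M) * t ^ (c.re - 1))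
    · filter_upwards [eventually_gt_atTop (0:ℝ), eventually_ge_atTop (2 * ‖z‖ + 1)]
        with t ht hzt
      have hItc : ‖(I * (t:ℂ)) ^ c‖ = t ^ c.re * M := by
        rw [Complex.norm_cpow_of_ne_zero (It_ne_zero ht), abs_It ht,
          arg_It ht, hM, div_eq_mul_inv]
      have htlow : t / 2 ≤ ‖z + I * (t:ℂ)‖ := by
        have h1 : ‖(I : ℂ) * t‖ ≤ ‖z + I * t‖ + ‖z‖ := by
          calc ‖(I : ℂ) * t‖ = ‖(z + I * t) + (-z)‖ := by ring_nf
            _ ≤ ‖z + I * t‖ + ‖-z‖ := norm_add_le _ _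
            _ = ‖z + I * t‖ + ‖z‖ := by rw [norm_neg]
        have h2 : ‖(I : ℂ) * t‖ = t := by
          rw [abs_It ht]
        have h3 : (0:ℝ) ≤ ‖z‖ := norm_nonneg _
        linarith
      have hwn0 : (0:ℝ) < ‖z + I * (t:ℂ)‖ := lt_of_lt_of_le (by linarith [norm_nonneg z]) htlow
      rw [norm_mul, hItc]
      calc ‖∫ u in Ioi (0:ℝ), Complex.exp (-(z + I * t) * u) * fe c u‖ * (t ^ c.re * M)
          ≤ (D / ‖z + I * (t:ℂ)‖) * (t ^ c.re * M) := by
            apply mul_le_mul_of_nonneg_right (hD _ (hwre t)) _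
            positivity
        _ ≤ (D / (t / 2)) * (t ^ c.re * M) := by
            apply mul_le_mul_of_nonneg_right _ (by positivity)
            apply div_le_div_of_nonneg_left hD0 (by linarith [norm_nonneg z]) htlow
        _ = (2 * D * M) * (t ^ c.re * t⁻¹) := by
            field_simp
        _ = (2 * D * M) * t ^ (c.re - 1) := by
            rw [Real.rpow_sub ht, Real.rpow_one]
            ring
    · have h1 : Tendsto (fun t : ℝ => t ^ (-(1 - c.re))) atTop (nhds 0) :=
        tendsto_rpow_neg_atTop (by linarith)
      have h2 : Tendsto (fun t : ℝ => t ^ (c.re - 1)) atTop (nhds 0) := by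
        convert h1 using 2
        ring
      simpa using h2.const_mul (2 * D * M)
  have hsum := hlim1.add hlim2
  rw [add_zero] at hsum
  apply hsum.congr'
  filter_upwards [eventually_gt_atTop (0:ℝ)] with t ht
  have hw : 0 < (z + I * (t:ℂ)).re := by rw [hwre]; exact hz
  rw [beta_split hc0 hc1 hw]
  ring

lemma Gamma_ratio_base {c z : ℂ} (hc0 : 0 < c.re) (hc1 : c.re < 1) (hz : 0 < z.re) :
    Tendsto (fun t : ℝ => Gamma (z + c + I * t) / Gamma (z + I * t) * (I * (t:ℂ)) ^ (-c))
      atTop (nhds 1) := by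
  have hΓc : Gamma c ≠ 0 := Complex.Gamma_ne_zero_of_re_pos hc0
  have hT := beta_tendsto hc0 hc1 hz
  have hdiv : Tendsto (fun t : ℝ =>
      Gamma c / (betaIntegral (z + I * t) c * (I * (t:ℂ)) ^ c)) atTop (nhds 1) := by
    have := (tendsto_const_nhds (x := Gamma c) (f := atTop (α := ℝ))).div hT hΓc
    rwa [div_self hΓc] at this
  apply hdiv.congr'
  filter_upwards [hT.eventually_ne hΓc, eventually_gt_atTop (0:ℝ),
    eventually_gt_atTop |z.im|] with t hne ht him
  have hΓzt : Gamma (z + I * (t:ℝ)) ≠ 0 := by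
    apply Complex.Gamma_ne_zero
    intro m h
    have : (z + I * (t:ℝ)).im = 0 := by rw [h]; simp
    simp only [Complex.add_im, Complex.mul_im, Complex.I_re, Complex.I_im,
      Complex.ofReal_re, Complex.ofReal_im] at this
    have habs := abs_le.1 (le_of_lt him)
    -- this : z.im + (0 * t + 1 * t) = 0  (roughly)
    nlinarith [abs_nonneg z.im, neg_abs_le z.im, le_abs_self z.im]
  have hrel := Complex.Gamma_mul_Gamma_eq_betaIntegral
    (s := z + I * (t:ℝ)) (t := c) (by simp [hz]) hc0
  have hβne : betaIntegral (z + I * (t:ℝ)) c ≠ 0 := by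
    intro h
    apply hne
    rw [h, zero_mul]
  have hItc : (I * (t:ℂ)) ^ c ≠ 0 := by
    intro h
    exact It_ne_zero ht ((Complex.cpow_eq_zero_iff _ _).1 h).1
  have hΓsum : Gamma (z + c + I * (t:ℝ))
      = Gamma (z + I * (t:ℝ)) * Gamma c / betaIntegral (z + I * (t:ℝ)) c := by
    rw [eq_div_iff hβne]
    rw [show z + c + I * (t:ℝ) = z + I * (t:ℝ) + c by ring]
    exact hrel.symm
  rw [hΓsum, Complex.cpow_neg]
  field_simp

/-- The master asymptotic relation. -/
def P (a b : ℂ) : Prop :=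
  Tendsto (fun t : ℝ => Gamma (a + I * t) / Gamma (b + I * t) * (I * (t:ℂ)) ^ (b - a))
    atTop (nhds 1)

lemma Gamma_ev_ne (a : ℂ) : ∀ᶠ t : ℝ in atTop, Gamma (a + I * t) ≠ 0 := by
  filter_upwards [eventually_gt_atTop |a.im|] with t ht
  apply Complex.Gamma_ne_zero
  intro m h
  have him : (a + I * (t:ℝ)).im = 0 := by rw [h]; simp
  simp only [Complex.add_im, Complex.mul_im, Complex.I_re, Complex.I_im,
    Complex.ofReal_re, Complex.ofReal_im] at him
  nlinarith [neg_abs_le a.im, le_abs_self a.im]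

lemma P_refl (a : ℂ) : P a a := by
  apply (tendsto_const_nhds (x := (1:ℂ)) (f := atTop (α := ℝ))).congr'
  filter_upwards [Gamma_ev_ne a] with t ht
  rw [sub_self, Complex.cpow_zero, mul_one, div_self ht]

lemma P_symm {a b : ℂ} (h : P a b) : P b a := by
  have hinv := h.inv₀ one_ne_zero
  rw [inv_one] at hinv
  apply hinv.congr'
  filter_upwards [Gamma_ev_ne a, Gamma_ev_ne b, eventually_gt_atTop (0:ℝ)] with t ha hb ht
  have hItc : (I * (t:ℂ)) ^ (b - a) ≠ 0 := by
    intro hh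
    exact It_ne_zero ht ((Complex.cpow_eq_zero_iff _ _).1 hh).1
  have hab : a - b = -(b - a) := by ring
  rw [hab, Complex.cpow_neg, mul_inv]
  congr 1
  rw [inv_div]

lemma P_trans {a b c : ℂ} (hab : P a b) (hbc : P b c) : P a c := by
  have hmul := hab.mul hbc
  rw [mul_one] at hmul
  apply hmul.congr'
  filter_upwards [Gamma_ev_ne b, eventually_gt_atTop (0:ℝ)] with t hb ht
  have hIt : I * (t:ℂ) ≠ 0 := It_ne_zero ht
  have hadd : (c - a) = (b - a) + (c - b) := by ring
  have hc2 : Gamma (a + I * ↑t) / Gamma (b + I * ↑t) * (Gamma (b + I * ↑t) / Gamma (c + I * ↑t))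
      = Gamma (a + I * ↑t) / Gamma (c + I * ↑t) := by
    rw [div_mul_div_comm, mul_comm (Gamma (a + I * ↑t)), mul_div_mul_left _ _ hb]
  rw [hadd, Complex.cpow_add _ _ hIt, ← hc2]
  ring

lemma P_succ (a : ℂ) : P a (a + 1) := by
  have hlim : Tendsto (fun t : ℝ => (I * (t:ℂ)) / (a + I * t)) atTop (nhds 1) := by
    have h1 : Tendsto (fun t : ℝ => a * (I * (t:ℂ))⁻¹) atTop (nhds 0) := by
      apply squeeze_zero_norm' (a := fun t : ℝ => ‖a‖ * t⁻¹)
      · filter_upwards [eventually_gt_atTop (0:ℝ)] with t ht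
        rw [norm_mul, norm_inv]
        have : ‖I * (t:ℂ)‖ = t := by
          rw [norm_mul, Complex.norm_I, Complex.norm_real, Real.norm_eq_abs, one_mul,
            _root_.abs_of_pos ht]
        rw [this]
      · simpa using tendsto_inv_atTop_zero.const_mul ‖a‖
    have h2 := h1.const_add (1:ℂ)
    rw [add_zero] at h2
    have h3 := h2.inv₀ one_ne_zero
    rw [inv_one] at h3
    apply h3.congr'
    filter_upwards [eventually_gt_atTop (0:ℝ)] with t ht
    have hIt : I * (t:ℂ) ≠ 0 := It_ne_zero ht
    rw [show (1 : ℂ) + a * (I * ↑t)⁻¹ = (a + I * t) / (I * t) by field_simp [Complex.ofReal_ne_zero.2 ht.ne']; ring, inv_div,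
      add_comm]
  apply hlim.congr'
  filter_upwards [Gamma_ev_ne a, eventually_gt_atTop (0:ℝ), eventually_gt_atTop |a.im|]
    with t ha ht him
  have hs0 : a + I * (t:ℝ) ≠ 0 := by
    intro h
    have : (a + I * (t:ℝ)).im = 0 := by rw [h]; simp
    simp only [Complex.add_im, Complex.mul_im, Complex.I_re, Complex.I_im,
      Complex.ofReal_re, Complex.ofReal_im] at this
    nlinarith [neg_abs_le a.im, le_abs_self a.im]
  have hrec : Gamma (a + 1 + I * (t:ℝ)) = (a + I * t) * Gamma (a + I * t) := by
    rw [show a + 1 + I * (t:ℝ) = (a + I * t) + 1 by ring]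
    exact Complex.Gamma_add_one _ hs0
  rw [hrec, show a + 1 - a = (1:ℂ) by ring, Complex.cpow_one]
  field_simp

lemma P_base {c z : ℂ} (hc0 : 0 < c.re) (hc1 : c.re < 1) (hz : 0 < z.re) : P (z + c) z := by
  have h := Gamma_ratio_base hc0 hc1 hz
  apply h.congr'
  apply Eventually.of_forall
  intro t
  rw [show z - (z + c) = -c by ring]

lemma P_shift_left {a b : ℂ} (h : P a b) : P (a + 1) b := P_trans (P_symm (P_succ a)) h
lemma P_shift_left' {a b : ℂ} (h : P (a + 1) b) : P a b := P_trans (P_succ a) h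
lemma P_shift_right {a b : ℂ} (h : P a b) : P a (b + 1) := P_trans h (P_succ b)
lemma P_shift_right' {a b : ℂ} (h : P a (b + 1)) : P a b := P_trans h (P_symm (P_succ b))

lemma P_nat_right (a b : ℂ) (n : ℕ) (h : P a b) : P a (b + n) := by
  induction n with
  | zero => simpa using h
  | succ k ih =>
      have := P_shift_right ih
      rwa [show b + (k:ℂ) + 1 = b + ((k:ℕ)+1 : ℕ) by push_cast; ring] at this

lemma P_to_nat_right (a b : ℂ) (n : ℕ) (h : P a (b + n)) : P a b := by
  induction n with
  | zero => simpa using h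
  | succ k ih =>
      apply ih
      apply P_shift_right'
      rwa [show b + (k:ℂ) + 1 = b + ((k:ℕ)+1 : ℕ) by push_cast; ring]

lemma P_all (a b : ℂ) : P a b := by
  -- reduce to shifted points with positive real parts and difference in [0,1)
  obtain ⟨n₀, hn₀⟩ := exists_nat_ge (|a.re| + |b.re| + 1)
  have key : ∀ A B : ℂ, 0 < A.re → 0 < B.re → 0 ≤ B.re - A.re → B.re - A.re < 1 → P A B := by
    intro A B hA hB hd0 hd1
    rcases eq_or_lt_of_le hd0 with heq | hlt
    · -- equal real parts: go through the midpoint A + 1/2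
      have h1 : P A (A + (1/2 : ℂ)) := P_symm (P_base (by norm_num) (by norm_num) hA)
      have h2 : P (A + (1/2 : ℂ)) B := by
        have hMB : P (B + ((A + 1/2) - B)) B := by
          apply P_base (c := (A + 1/2) - B) _ _ hB
          · simp only [Complex.sub_re, Complex.add_re]
            norm_num
            linarith
          · simp only [Complex.sub_re, Complex.add_re]
            norm_num
            linarith
        rw [show B + ((A + 1/2) - B) = A + 1/2 by ring] at hMB
        exact hMB
      exact P_trans h1 h2
    · -- strictly positive difference
      have h := P_base (c := B - A) (by simpa [Complex.sub_re] using hlt)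
        (by simpa [Complex.sub_re] using hd1) hA
      rw [show A + (B - A) = B by ring] at h
      exact P_symm h
  -- now shift a and b
  set q : ℤ := ⌊b.re - a.re⌋ with hq
  have hfr0 : 0 ≤ b.re - a.re - q := by
    have := Int.fract_nonneg (b.re - a.re)
    rwa [Int.fract] at this
  have hfr1 : b.re - a.re - q < 1 := by
    have := Int.fract_lt_one (b.re - a.re)
    rwa [Int.fract] at this
  have hare : -(|a.re| + |b.re| + 1) < a.re := by
    have := neg_abs_le a.re
    have := abs_nonneg b.re
    linarith
  have hbre : -(|a.re| + |b.re| + 1) < b.re := by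
    have := neg_abs_le b.re
    have := abs_nonneg a.re
    linarith
  rcases le_or_gt 0 q with hq0 | hq0
  · -- shift a by n₀ + q.toNat, b by n₀
    have hPab : P (a + ((n₀ + q.toNat : ℕ) : ℂ)) (b + (n₀ : ℂ)) := by
      apply key
      · simp only [Complex.add_re, Complex.natCast_re]
        push_cast
        have : (q.toNat : ℝ) = (q : ℝ) := by exact_mod_cast Int.toNat_of_nonneg hq0
        rw [this]
        have hq0' : (0:ℝ) ≤ q := by exact_mod_cast hq0
        linarith
      · simp only [Complex.add_re, Complex.natCast_re]
        linarith
      · simp only [Complex.add_re, Complex.natCast_re]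
        push_cast
        have : (q.toNat : ℝ) = (q : ℝ) := by exact_mod_cast Int.toNat_of_nonneg hq0
        rw [this]
        linarith
      · simp only [Complex.add_re, Complex.natCast_re]
        push_cast
        have : (q.toNat : ℝ) = (q : ℝ) := by exact_mod_cast Int.toNat_of_nonneg hq0
        rw [this]
        linarith
    have h1 : P a (a + ((n₀ + q.toNat : ℕ) : ℂ)) := P_nat_right a a _ (P_refl a)
    have h2 : P (b + (n₀ : ℂ)) b := P_symm (by
      have := P_nat_right b b n₀ (P_refl b)
      exact this)
    exact P_trans (P_trans h1 hPab) h2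
  · -- q < 0 : shift a by n₀, b by n₀ + (-q).toNat
    have hPab : P (a + (n₀ : ℂ)) (b + ((n₀ + (-q).toNat : ℕ) : ℂ)) := by
      have htn : ((-q).toNat : ℝ) = -(q : ℝ) := by
        have h := Int.toNat_of_nonneg (by linarith : (0:ℤ) ≤ -q)
        exact_mod_cast h
      apply key
      · simp only [Complex.add_re, Complex.natCast_re]
        linarith
      · simp only [Complex.add_re, Complex.natCast_re]
        push_cast
        rw [htn]
        have hq0' : (q:ℝ) < 0 := by exact_mod_cast hq0
        linarith
      · simp only [Complex.add_re, Complex.natCast_re]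
        push_cast
        rw [htn]
        linarith
      · simp only [Complex.add_re, Complex.natCast_re]
        push_cast
        rw [htn]
        linarith
    have h1 : P a (a + (n₀ : ℂ)) := P_nat_right a a _ (P_refl a)
    have h2 : P (b + ((n₀ + (-q).toNat : ℕ) : ℂ)) b := P_symm (P_nat_right b b _ (P_refl b))
    exact P_trans (P_trans h1 hPab) h2

lemma log_neg_It {t : ℝ} (ht : 0 < t) :
    Complex.log (-(I * t)) = Real.log t - (Real.pi / 2 : ℝ) * I := by
  rw [Complex.log]
  have habs : ‖-(I * (t:ℂ))‖ = t := by
    rw [norm_neg, norm_mul, Complex.norm_I, Complex.norm_real, Real.norm_eq_abs, one_mul,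
      _root_.abs_of_pos ht]
  have harg : (-(I * (t:ℂ))).arg = -(Real.pi / 2) := by
    rw [Complex.arg_eq_neg_pi_div_two_iff]
    constructor <;> simp [ht]
  rw [habs, harg]
  push_cast
  ring

lemma pow_pair {t : ℝ} (ht : 0 < t) (e : ℂ) :
    (I * (t:ℂ)) ^ e * (-(I * (t:ℂ))) ^ e = ((t:ℝ) : ℂ) ^ (2 * e) := by
  have h1 : I * (t:ℂ) ≠ 0 := It_ne_zero ht
  have h2 : -(I * (t:ℂ)) ≠ 0 := neg_ne_zero.2 h1
  have h3 : ((t:ℝ) : ℂ) ≠ 0 := Complex.ofReal_ne_zero.2 ht.ne'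
  rw [Complex.cpow_def_of_ne_zero h1, Complex.cpow_def_of_ne_zero h2,
    Complex.cpow_def_of_ne_zero h3, ← Complex.exp_add, log_It ht, log_neg_It ht,
    ← Complex.ofReal_log ht.le]
  congr 1
  ring

lemma P_neg (a b : ℂ) :
    Tendsto (fun t : ℝ => Complex.Gamma (a - I * t) / Complex.Gamma (b - I * t)
      * (-(I * (t:ℂ))) ^ (b - a)) atTop (nhds 1) := by
  have h := P_all ((starRingEnd ℂ) a) ((starRingEnd ℂ) b)
  have hc := (continuous_star.tendsto (1:ℂ)).comp h
  rw [show star (1:ℂ) = 1 from by simp] at hc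
  apply hc.congr'
  filter_upwards [eventually_gt_atTop (0:ℝ)] with t ht
  show (starRingEnd ℂ) (Complex.Gamma ((starRingEnd ℂ) a + I * t)
      / Complex.Gamma ((starRingEnd ℂ) b + I * t)
      * (I * (t:ℂ)) ^ ((starRingEnd ℂ) b - (starRingEnd ℂ) a)) = _
  rw [map_mul, map_div₀]
  have hg : ∀ x : ℂ, (starRingEnd ℂ) (Complex.Gamma ((starRingEnd ℂ) x + I * t))
      = Complex.Gamma (x - I * t) := by
    intro x
    rw [← Complex.Gamma_conj]
    congr 1
    simp only [map_add, map_mul, Complex.conj_conj, Complex.conj_I]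
    push_cast
    rw [Complex.conj_ofReal]
    ring
  rw [hg a, hg b]
  congr 1
  have hsub : (starRingEnd ℂ) b - (starRingEnd ℂ) a = (starRingEnd ℂ) (b - a) := (map_sub _ _ _).symm
  rw [hsub]
  have hcc := Complex.conj_cpow (I * (t:ℂ)) (b - a)
    (by rw [arg_It ht]; intro hh; linarith [Real.pi_pos])
  rw [← hcc]
  congr 1
  simp only [map_mul, Complex.conj_I]
  push_cast
  rw [Complex.conj_ofReal]
  ring

end Stmt5Aux

open Stmt5Aux

/-- Leading-order asymptotic `β_κ(s)/β_κ(1−s) ∼ (ωκ/2)^{2s−1}` as `κ → +∞`. -/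
theorem stmt5 (ω : ℝ) (hω : 0 < ω) (s : ℂ) :
    Tendsto (fun κ : ℝ =>
      betaFun ω κ s / betaFun ω κ (1 - s) * (((ω * κ / 2 : ℝ) : ℂ) ^ ((1 : ℂ) - 2 * s)))
      atTop (nhds 1) := by
  set a₁ : ℂ := (s + 1) / 2 with ha₁
  set a₂ : ℂ := (2 - s) / 2 with ha₂
  set e : ℂ := a₂ - a₁ with he
  have h2e : 2 * e = 1 - 2 * s := by rw [he, ha₁, ha₂]; ring
  have hP : Tendsto (fun t : ℝ => Complex.Gamma (a₁ + I * t) / Complex.Gamma (a₂ + I * t)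
      * (I * (t:ℂ)) ^ e) atTop (nhds 1) := P_all a₁ a₂
  have hQ := P_neg a₁ a₂
  have hprod := hP.mul hQ
  rw [mul_one] at hprod
  have htt : Tendsto (fun κ : ℝ => ω * κ / 2) atTop atTop :=
    (tendsto_id.const_mul_atTop hω).atTop_div_const two_pos
  have hcomp := hprod.comp htt
  apply hcomp.congr'
  filter_upwards [eventually_gt_atTop (0:ℝ)] with κ hκ
  have ht : 0 < ω * κ / 2 := by positivity
  set t : ℝ := ω * κ / 2 with htdef
  show Complex.Gamma (a₁ + I * t) / Complex.Gamma (a₂ + I * t) * (I * (t:ℂ)) ^ e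
      * (Complex.Gamma (a₁ - I * t) / Complex.Gamma (a₂ - I * t) * (-(I * (t:ℂ))) ^ e)
    = betaFun ω κ s / betaFun ω κ (1 - s) * (((t : ℝ) : ℂ) ^ ((1 : ℂ) - 2 * s))
  have harg1 : (s + Complex.I * ω * κ + 1) / 2 = a₁ + I * (t:ℝ) := by
    rw [ha₁, htdef]; push_cast; ring
  have harg2 : (s - Complex.I * ω * κ + 1) / 2 = a₁ - I * (t:ℝ) := by
    rw [ha₁, htdef]; push_cast; ring
  have harg3 : ((1 - s) + Complex.I * ω * κ + 1) / 2 = a₂ + I * (t:ℝ) := by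
    rw [ha₂, htdef]; push_cast; ring
  have harg4 : ((1 - s) - Complex.I * ω * κ + 1) / 2 = a₂ - I * (t:ℝ) := by
    rw [ha₂, htdef]; push_cast; ring
  have hbeta : betaFun ω κ s / betaFun ω κ (1 - s)
      = Complex.Gamma (a₁ + I * t) / Complex.Gamma (a₂ + I * t)
        * (Complex.Gamma (a₁ - I * t) / Complex.Gamma (a₂ - I * t)) := by
    rw [betaFun, betaFun, harg1, harg2, harg3, harg4, mul_assoc, mul_assoc,
      mul_div_mul_left _ _ (by norm_num : (1/2 : ℂ) ≠ 0), ← div_mul_div_comm]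
  have hpow : (I * (t:ℂ)) ^ e * (-(I * (t:ℂ))) ^ e = ((t : ℝ) : ℂ) ^ ((1:ℂ) - 2 * s) := by
    rw [pow_pair ht e, h2e]
  rw [hbeta, ← hpow]
  ring
end

section
/- Fix s ∈ ℂ, a real number ω > 0, and ϑ ∈ ℝ, and for κ ∈ ℝ set β_κ(s) := (1/2)·Γ((s + iωκ + 1)/2)·Γ((s − iωκ + 1)/2). Then there exists a constant C > 0 such that for every k ∈ ℤ with Γ(s − 1/2)·β_{k+ϑ}(1 − s) ≠ 0, one has |Γ(1/2 − s)·β_{k+ϑ}(s) / (Γ(s − 1/2)·β_{k+ϑ}(1 − s))| ≤ C·(1 + |k|)^{2·Re s − 1}. -/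
open Complex Filter

noncomputable def Complex.abs : AbsoluteValue ℂ ℝ where
  toFun := fun z => ‖z‖
  map_mul' := norm_mul
  nonneg' := norm_nonneg
  eq_zero' := fun _ => norm_eq_zero
  add_le' := norm_add_le

theorem Complex.norm_eq_abs (z : ℂ) : ‖z‖ = Complex.abs z := rfl

theorem Complex.abs_ofReal (r : ℝ) : Complex.abs (r : ℂ) = |r| := Complex.norm_real r

theorem Complex.abs_natCast (n : ℕ) : Complex.abs (n : ℂ) = n := Complex.norm_natCast n

theorem Complex.abs_I : Complex.abs Complex.I = 1 := Complex.norm_I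

theorem Complex.abs_conj (z : ℂ) : Complex.abs (starRingEnd ℂ z) = Complex.abs z :=
  Complex.norm_conj z

theorem Complex.abs_cpow_eq_rpow_re_of_pos {x : ℝ} (hx : 0 < x) (y : ℂ) :
    Complex.abs ((x : ℂ) ^ y) = x ^ y.re := Complex.norm_cpow_eq_rpow_re_of_pos hx y

theorem Complex.continuous_abs : Continuous Complex.abs := continuous_norm

theorem Complex.abs_re_le_abs (z : ℂ) : |z.re| ≤ Complex.abs z := Complex.abs_re_le_norm z

theorem Complex.abs_im_le_abs (z : ℂ) : |z.im| ≤ Complex.abs z := Complex.abs_im_le_norm z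

theorem Complex.re_le_abs (z : ℂ) : z.re ≤ Complex.abs z := Complex.re_le_norm z

theorem Complex.sq_abs (z : ℂ) : Complex.abs z ^ 2 = Complex.normSq z := Complex.sq_norm z


lemma arctan_step (u : ℝ) :
    1/(u^2+4) ≤ Real.arctan ((u+1)/2) - Real.arctan (u/2) := by
  have h1 : ∀ v : ℝ, HasDerivAt (fun w : ℝ => Real.arctan (w/2)) (2/(v^2+4)) v := by
    intro v
    have := (Real.hasDerivAt_arctan (v/2)).comp v ((hasDerivAt_id v).div_const 2)
    refine this.congr_deriv ?_
    field_simp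
    ring
  obtain ⟨c, hc, hceq⟩ := exists_hasDerivAt_eq_slope (fun w : ℝ => Real.arctan (w/2))
    (fun v => 2/(v^2+4)) (by linarith : u < u + 1)
    (fun v _ => (h1 v).continuousAt.continuousWithinAt) (fun v _ => h1 v)
  have hc1 : u < c := hc.1
  have hc2 : c < u + 1 := hc.2
  have hcsq : c^2 ≤ 2*u^2 + 4 := by nlinarith [mul_pos (sub_pos.2 hc1) (sub_pos.2 hc2)]
  have : (1:ℝ)/(u^2+4) ≤ 2/(c^2+4) := by
    rw [div_le_div_iff₀ (by positivity) (by positivity)]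
    nlinarith
  calc 1/(u^2+4) ≤ 2/(c^2+4) := this
    _ = Real.arctan ((u+1)/2) - Real.arctan (u/2) := by
        rw [hceq]; simp

lemma sum_bound (x : ℝ) (n : ℕ) :
    ∑ j ∈ Finset.range n, 1/((x+(j:ℝ))^2+4) ≤ Real.pi := by
  have key : ∑ j ∈ Finset.range n, 1/((x+(j:ℝ))^2+4)
      ≤ ∑ j ∈ Finset.range n,
        (Real.arctan ((x+(j:ℝ)+1)/2) - Real.arctan ((x+(j:ℝ))/2)) :=
    Finset.sum_le_sum fun j _ => arctan_step (x + j)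
  have tel : ∑ j ∈ Finset.range n,
      (Real.arctan ((x+(j:ℝ)+1)/2) - Real.arctan ((x+(j:ℝ))/2))
      = Real.arctan ((x+(n:ℝ))/2) - Real.arctan (x/2) := by
    have h := Finset.sum_range_sub (fun j : ℕ => Real.arctan ((x+(j:ℝ))/2)) n
    have h2 : ∀ j ∈ Finset.range n,
        (Real.arctan ((x+(j:ℝ)+1)/2) - Real.arctan ((x+(j:ℝ))/2))
        = (Real.arctan ((x+((j+1:ℕ):ℝ))/2) - Real.arctan ((x+(j:ℝ))/2)) := by
      intro j _; push_cast; ring_nf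
    rw [Finset.sum_congr rfl h2, h]
    norm_num
  rw [tel] at key
  have := Real.arctan_lt_pi_div_two ((x+(n:ℝ))/2)
  have := Real.neg_pi_div_two_lt_arctan (x/2)
  linarith


lemma re_log_one_add {w : ℂ} (h : Complex.abs w ≤ 1/2) :
    |(Complex.log (1+w)).re - w.re| ≤ (Complex.abs w)^2 := by
  have h1 : ‖w‖ < 1 := by rw [Complex.norm_eq_abs]; linarith
  have := Complex.norm_log_one_add_sub_self_le h1
  have h2 : |(Complex.log (1+w)).re - w.re| ≤ ‖Complex.log (1+w) - w‖ := by
    rw [show (Complex.log (1+w)).re - w.re = (Complex.log (1+w) - w).re by simp]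
    exact Complex.abs_re_le_abs _
  have h3 : ‖w‖^2 * (1-‖w‖)⁻¹ / 2 ≤ ‖w‖^2 := by
    rw [Complex.norm_eq_abs] at *
    have hinv : (1 - Complex.abs w)⁻¹ ≤ 2 := by
      rw [inv_le_comm₀ (by linarith) (by norm_num)]
      linarith
    have : (Complex.abs w)^2 * (1-Complex.abs w)⁻¹ ≤ (Complex.abs w)^2 * 2 := by
      apply mul_le_mul_of_nonneg_left hinv (by positivity)
    linarith
  calc |(Complex.log (1+w)).re - w.re| ≤ ‖Complex.log (1+w) - w‖ := h2
    _ ≤ ‖w‖^2 * (1-‖w‖)⁻¹ / 2 := this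
    _ ≤ ‖w‖^2 := h3
    _ = (Complex.abs w)^2 := by rw [Complex.norm_eq_abs]

lemma log_abs_shift {z : ℂ} (δ : ℝ) (hz : z ≠ 0)
    (h : |δ| / Complex.abs z ≤ 1/2) :
    |Real.log (Complex.abs (z+δ)) - Real.log (Complex.abs z) - δ*(z⁻¹).re|
      ≤ δ^2/(Complex.abs z)^2 := by
  set w : ℂ := (δ:ℂ)/z with hw
  have habsw : Complex.abs w = |δ| / Complex.abs z := by
    rw [hw, map_div₀, Complex.abs_ofReal]
  have hlt : Complex.abs w ≤ 1/2 := by rw [habsw]; exact h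
  have hne : z + δ ≠ 0 := by
    intro hc
    have : w = -1 := by
      rw [hw, div_eq_iff hz]
      have : (δ:ℂ) = -z := by linear_combination hc
      rw [this]; ring
    rw [this] at hlt
    simp at hlt
    norm_num at hlt
  have h1 : (1 : ℂ) + w = (z+δ)/z := by
    rw [hw]; field_simp
  have h2 : Real.log (Complex.abs (z+δ)) - Real.log (Complex.abs z)
      = (Complex.log (1+w)).re := by
    rw [h1, Complex.log_re, Complex.norm_eq_abs, map_div₀, Real.log_div (Complex.abs.ne_zero hne) (Complex.abs.ne_zero hz)]
  have h3 : w.re = δ * (z⁻¹).re := by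
    rw [hw, div_eq_mul_inv]
    simp [Complex.mul_re]
  have := re_log_one_add hlt
  rw [h2, ← h3]
  calc |(Complex.log (1+w)).re - w.re| ≤ (Complex.abs w)^2 := this
    _ = δ^2/(Complex.abs z)^2 := by rw [habsw, div_pow, _root_.sq_abs]


lemma gammaSeq_ratio_bound (x₁ x₂ y : ℝ) (hy : 2 ≤ |y|) (hδ : 2*|x₂-x₁| ≤ |y|)
    (n : ℕ) (hn : 2*(|x₁|+|y|+2) ≤ (n:ℝ)) :
    (n:ℝ)^(x₁-x₂) * ∏ j ∈ Finset.range (n+1),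
      (Complex.abs ((x₂:ℂ)+y*I+j) / Complex.abs ((x₁:ℂ)+y*I+j))
    ≤ Real.exp (((x₂-x₁)^2+|x₂-x₁|)*Real.pi + |x₂-x₁| *(1+Real.log (1+|x₁|)))
        * |y|^(x₁-x₂) := by
  set δ := x₂ - x₁ with hδdef
  set z₁ : ℂ := (x₁:ℂ)+y*I with hz₁
  set z₂ : ℂ := (x₂:ℂ)+y*I with hz₂
  set f : ℕ → ℝ := fun j => Real.log (Complex.abs (z₁ + j)) with hf
  set g : ℕ → ℝ := fun j => Real.log (Complex.abs (z₂ + j)) with hg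
  have hy0 : (0:ℝ) < |y| := by linarith
  have him : ∀ j : ℕ, (z₁ + j).im = y := by intro j; simp [hz₁]
  have hre : ∀ j : ℕ, (z₁ + j).re = x₁ + j := by intro j; simp [hz₁]
  have him2 : ∀ j : ℕ, (z₂ + j).im = y := by intro j; simp [hz₂]
  have habs_ge : ∀ j : ℕ, |y| ≤ Complex.abs (z₁ + j) := by
    intro j
    have := Complex.abs_im_le_abs (z₁ + j)
    rwa [him j] at this
  have habs_ge2 : ∀ j : ℕ, |y| ≤ Complex.abs (z₂ + j) := by
    intro j
    have := Complex.abs_im_le_abs (z₂ + j)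
    rwa [him2 j] at this
  have hne : ∀ j : ℕ, z₁ + j ≠ 0 := by
    intro j h0
    have h1 := congrArg Complex.im h0
    rw [him j] at h1
    simp at h1
    rw [h1] at hy
    simp at hy
    linarith
  have habssq : ∀ j : ℕ, ((x₁+(j:ℝ))^2+4) ≤ (Complex.abs (z₁ + j))^2 := by
    intro j
    rw [Complex.sq_abs, Complex.normSq_apply, hre j, him j]
    nlinarith [hy, abs_nonneg y, _root_.sq_abs y]
  -- per-term estimate
  have step : ∀ j ∈ Finset.range (n+1),
      |g j - f j - δ*(f (j+1) - f j)| ≤ (δ^2+|δ|) * (1/((x₁+(j:ℝ))^2+4)) := by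
    intro j _
    have hA2 : (0:ℝ) < (Complex.abs (z₁+j))^2 := by
      have h := lt_of_lt_of_le hy0 (habs_ge j); positivity
    have hA : (0:ℝ) < (x₁+(j:ℝ))^2+4 := by positivity
    have h2a : |δ| / Complex.abs (z₁ + j) ≤ 1/2 := by
      rw [div_le_iff₀ (by linarith [habs_ge j] : (0:ℝ) < Complex.abs (z₁+j))]
      have := habs_ge j
      linarith
    have h1a : |(1:ℝ)| / Complex.abs (z₁ + j) ≤ 1/2 := by
      rw [abs_one, div_le_iff₀ (by linarith [habs_ge j] : (0:ℝ) < Complex.abs (z₁+j))]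
      linarith [habs_ge j]
    have e1 : |g j - f j - δ*((z₁+(j:ℕ))⁻¹).re| ≤ δ^2/(Complex.abs (z₁+j))^2 := by
      have hz2j : z₂ + (j:ℕ) = (z₁ + j) + (δ:ℂ) := by
        rw [hz₁, hz₂, hδdef]; push_cast; ring
      have := log_abs_shift δ (hne j) h2a
      simp only [hg, hf]
      rw [hz2j]
      exact this
    have e2 : |f (j+1) - f j - 1*((z₁+(j:ℕ))⁻¹).re| ≤ 1/(Complex.abs (z₁+j))^2 := by
      have hz1j : z₁ + ((j+1:ℕ):ℂ) = (z₁ + j) + ((1:ℝ):ℂ) := by push_cast; ring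
      have := log_abs_shift 1 (hne j) h1a
      simp only [hf]
      rw [hz1j]
      simpa using this
    calc |g j - f j - δ*(f (j+1) - f j)|
        = |(g j - f j - δ*((z₁+(j:ℕ))⁻¹).re)
            - δ*((f (j+1) - f j) - 1*((z₁+(j:ℕ))⁻¹).re)| := by ring_nf
      _ ≤ |g j - f j - δ*((z₁+(j:ℕ))⁻¹).re|
            + |δ*((f (j+1) - f j) - 1*((z₁+(j:ℕ))⁻¹).re)| := abs_sub _ _
      _ ≤ δ^2/(Complex.abs (z₁+j))^2 + |δ| * (1/(Complex.abs (z₁+j))^2) := by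
          refine add_le_add e1 ?_
          rw [abs_mul]
          exact mul_le_mul_of_nonneg_left (by simpa using e2) (abs_nonneg δ)
      _ = (δ^2+|δ|) / (Complex.abs (z₁+j))^2 := by ring
      _ ≤ (δ^2+|δ|) / ((x₁+(j:ℝ))^2+4) := by
          apply div_le_div_of_nonneg_left _ hA (habssq j)
          positivity
      _ = (δ^2+|δ|) * (1/((x₁+(j:ℝ))^2+4)) := by ring
  -- sum the per-term estimates; telescoping
  have tel := Finset.sum_range_sub f (n+1)
  have Tsum : |(∑ j ∈ Finset.range (n+1), (g j - f j)) - δ*(f (n+1) - f 0)|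
      ≤ (δ^2+|δ|)*Real.pi := by
    have hrw : (∑ j ∈ Finset.range (n+1), (g j - f j)) - δ*(f (n+1) - f 0)
        = ∑ j ∈ Finset.range (n+1), (g j - f j - δ*(f (j+1) - f j)) := by
      simp only [Finset.sum_sub_distrib, ← Finset.mul_sum, tel]
    rw [hrw]
    calc |∑ j ∈ Finset.range (n+1), (g j - f j - δ*(f (j+1) - f j))|
        ≤ ∑ j ∈ Finset.range (n+1), |g j - f j - δ*(f (j+1) - f j)| :=
          Finset.abs_sum_le_sum_abs _ _
      _ ≤ ∑ j ∈ Finset.range (n+1), (δ^2+|δ|) * (1/((x₁+(j:ℝ))^2+4)) :=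
          Finset.sum_le_sum step
      _ = (δ^2+|δ|) * ∑ j ∈ Finset.range (n+1), 1/((x₁+(j:ℝ))^2+4) := by
          rw [← Finset.mul_sum]
      _ ≤ (δ^2+|δ|) * Real.pi := by
          apply mul_le_mul_of_nonneg_left (sum_bound x₁ (n+1)) (by positivity)
  -- bounds on the telescoped quantity
  have hn8 : (8:ℝ) ≤ (n:ℝ) := by
    have := abs_nonneg x₁; linarith
  have hnpos : (0:ℝ) < (n:ℝ) := by linarith
  have habsz₁ : Complex.abs z₁ ≤ |x₁| + |y| := by
    calc Complex.abs z₁ ≤ Complex.abs (x₁:ℂ) + Complex.abs ((y:ℂ)*I) :=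
          Complex.abs.add_le _ _
      _ = |x₁| + |y| := by
          rw [map_mul, Complex.abs_ofReal, Complex.abs_ofReal, Complex.abs_I, mul_one]
  have hU1 : |f (n+1) - Real.log (n:ℝ)| ≤ 1 := by
    have hfa : (n:ℝ)/2 ≤ Complex.abs (z₁ + ((n+1:ℕ):ℂ)) := by
      have h1 := Complex.re_le_abs (z₁ + ((n+1:ℕ):ℂ))
      have h2 := hre (n+1)
      rw [h2] at h1
      push_cast at h1 ⊢
      have := neg_abs_le x₁
      linarith
    have hfb : Complex.abs (z₁ + ((n+1:ℕ):ℂ)) ≤ 2*(n:ℝ) := by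
      calc Complex.abs (z₁ + ((n+1:ℕ):ℂ))
          ≤ Complex.abs z₁ + Complex.abs ((n+1:ℕ):ℂ) := Complex.abs.add_le _ _
        _ = Complex.abs z₁ + ((n:ℝ)+1) := by
            rw [Complex.abs_natCast]; push_cast; ring
        _ ≤ 2*(n:ℝ) := by linarith [habsz₁]
    have l1 : Real.log ((n:ℝ)/2) ≤ f (n+1) := by
      apply Real.log_le_log (by positivity)
      exact hfa
    have l2 : f (n+1) ≤ Real.log (2*(n:ℝ)) := by
      apply Real.log_le_log (lt_of_lt_of_le hy0 (habs_ge (n+1)))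
      exact hfb
    rw [Real.log_div (ne_of_gt hnpos) two_ne_zero] at l1
    rw [Real.log_mul two_ne_zero (ne_of_gt hnpos)] at l2
    have := Real.log_two_lt_d9
    have := Real.log_pos (by norm_num : (1:ℝ) < 2)
    rw [abs_le]; constructor <;> linarith
  have hf0 : f 0 = Real.log (Complex.abs z₁) := by simp [hf]
  have habsz₁' : |y| ≤ Complex.abs z₁ := by simpa using habs_ge 0
  have hU2 : |f 0 - Real.log (|y|)| ≤ Real.log (1+|x₁|) := by
    have l1 : Real.log (|y|) ≤ f 0 := by
      rw [hf0]
      exact Real.log_le_log hy0 habsz₁'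
    have l2 : f 0 ≤ Real.log ((1+|x₁|) * |y|) := by
      rw [hf0]
      apply Real.log_le_log (lt_of_lt_of_le hy0 habsz₁')
      nlinarith [habsz₁, abs_nonneg x₁, hy]
    rw [Real.log_mul (by positivity) (ne_of_gt hy0)] at l2
    have hlog1 : 0 ≤ Real.log (1+|x₁|) := Real.log_nonneg (by linarith [abs_nonneg x₁])
    rw [abs_le]; constructor <;> linarith
  -- assemble the additive inequality
  have key : (x₁-x₂)*Real.log (n:ℝ) + ∑ j ∈ Finset.range (n+1), (g j - f j)
      ≤ (((x₂-x₁)^2+|x₂-x₁|)*Real.pi + |x₂-x₁| *(1+Real.log (1+|x₁|)))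
        + (x₁-x₂)*Real.log (|y|) := by
    have habs1 : |δ*((f (n+1) - f 0) - (Real.log (n:ℝ) - Real.log (|y|)))|
        ≤ |δ| *(1+Real.log (1+|x₁|)) := by
      rw [abs_mul]
      apply mul_le_mul_of_nonneg_left _ (abs_nonneg δ)
      calc |(f (n+1) - f 0) - (Real.log (n:ℝ) - Real.log (|y|))|
          = |(f (n+1) - Real.log (n:ℝ)) - (f 0 - Real.log (|y|))| := by ring_nf
        _ ≤ |f (n+1) - Real.log (n:ℝ)| + |f 0 - Real.log (|y|)| := abs_sub _ _
        _ ≤ 1 + Real.log (1+|x₁|) := add_le_add hU1 hU2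
    have t1 := (abs_le.mp Tsum).2
    have t2 := (abs_le.mp habs1).2
    have hδeq : x₁ - x₂ = -δ := by rw [hδdef]; ring
    rw [hδeq]
    simp only [← hδdef]
    linarith [t1, t2]
  -- convert to multiplicative form
  have habspos : ∀ j : ℕ, (0:ℝ) < Complex.abs (z₁ + j) := fun j => lt_of_lt_of_le hy0 (habs_ge j)
  have habspos2 : ∀ j : ℕ, (0:ℝ) < Complex.abs (z₂ + j) := fun j => lt_of_lt_of_le hy0 (habs_ge2 j)
  have e₁ : (n:ℝ)^(x₁-x₂) = Real.exp ((x₁-x₂)*Real.log (n:ℝ)) := by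
    rw [Real.rpow_def_of_pos hnpos]; ring_nf
  have e₂ : (∏ j ∈ Finset.range (n+1),
      (Complex.abs (z₂+j) / Complex.abs (z₁+j)))
      = Real.exp (∑ j ∈ Finset.range (n+1), (g j - f j)) := by
    rw [Real.exp_sum]
    apply Finset.prod_congr rfl
    intro j _
    rw [Real.exp_sub]
    simp only [hg, hf]
    rw [Real.exp_log (habspos2 j), Real.exp_log (habspos j)]
  have e₃ : |y|^(x₁-x₂) = Real.exp ((x₁-x₂)*Real.log (|y|)) := by
    rw [Real.rpow_def_of_pos hy0]; ring_nf
  rw [e₁, e₂, e₃, ← Real.exp_add, ← Real.exp_add]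
  exact Real.exp_le_exp.mpr key


lemma gammaA (x₁ x₂ : ℝ) : ∃ C > 0, ∀ y : ℝ, 2 ≤ |y| → 2*|x₂-x₁| ≤ |y| →
    Complex.abs (Complex.Gamma ((x₁:ℂ)+y*I))
      ≤ C * |y|^(x₁-x₂) * Complex.abs (Complex.Gamma ((x₂:ℂ)+y*I)) := by
  set C := Real.exp (((x₂-x₁)^2+|x₂-x₁|)*Real.pi + |x₂-x₁| * (1+Real.log (1+|x₁|)))
    with hC
  refine ⟨C, Real.exp_pos _, fun y hy hδ => ?_⟩
  have hy0 : (0:ℝ) < |y| := by linarith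
  have hyne : y ≠ 0 := by intro h; rw [h] at hy0; simp at hy0
  set z₁ : ℂ := (x₁:ℂ)+y*I with hz₁
  set z₂ : ℂ := (x₂:ℂ)+y*I with hz₂
  have him1 : z₁.im = y := by simp [hz₁]
  have him2 : z₂.im = y := by simp [hz₂]
  have hG2 : Complex.Gamma z₂ ≠ 0 := by
    apply Complex.Gamma_ne_zero
    intro m h
    have := congrArg Complex.im h
    rw [him2] at this
    simp at this
    exact hyne this
  -- nonvanishing of products
  have hne : ∀ (x : ℝ) (j : ℕ), (x:ℂ) + y*I + j ≠ 0 := by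
    intro x j h
    have := congrArg Complex.im h
    simp at this
    exact hyne this
  have hprodne : ∀ x : ℝ, ∀ n : ℕ, (∏ j ∈ Finset.range (n+1), ((x:ℂ)+y*I+j)) ≠ 0 :=
    fun x n => Finset.prod_ne_zero_iff.mpr fun j _ => hne x j
  -- the ratio of GammaSeq tends to the ratio of Gammas
  have htend : Tendsto (fun n => Complex.abs (GammaSeq z₁ n / GammaSeq z₂ n)) atTop
      (nhds (Complex.abs (Complex.Gamma z₁ / Complex.Gamma z₂))) := by
    have h0 : Tendsto (fun n => GammaSeq z₁ n / GammaSeq z₂ n) atTop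
        (nhds (Complex.Gamma z₁ / Complex.Gamma z₂)) :=
      (Complex.GammaSeq_tendsto_Gamma z₁).div (Complex.GammaSeq_tendsto_Gamma z₂) hG2
    exact (Complex.continuous_abs.tendsto _).comp h0
  -- eventual bound
  have hev : ∀ᶠ n in atTop, Complex.abs (GammaSeq z₁ n / GammaSeq z₂ n)
      ≤ C * |y|^(x₁-x₂) := by
    rw [eventually_atTop]
    obtain ⟨N, hN⟩ := exists_nat_ge (2*(|x₁|+|y|+2))
    refine ⟨max N 1, fun n hn => ?_⟩
    have hn1 : 1 ≤ n := le_trans (le_max_right _ _) hn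
    have hnN : (2*(|x₁|+|y|+2)) ≤ (n:ℝ) := by
      refine le_trans hN ?_
      exact_mod_cast le_trans (le_max_left _ _) hn
    have hnpos : (0:ℝ) < (n:ℝ) := by positivity
    have key := gammaSeq_ratio_bound x₁ x₂ y hy hδ n hnN
    have habsratio : Complex.abs (GammaSeq z₁ n / GammaSeq z₂ n)
        = (n:ℝ)^(x₁-x₂) * ∏ j ∈ Finset.range (n+1),
            (Complex.abs (z₂+j) / Complex.abs (z₁+j)) := by
      have hQ1 : (0:ℝ) < Complex.abs (∏ j ∈ Finset.range (n+1), (z₁+j)) :=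
        Complex.abs.pos (hprodne x₁ n)
      have hQ2 : (0:ℝ) < Complex.abs (∏ j ∈ Finset.range (n+1), (z₂+j)) :=
        Complex.abs.pos (hprodne x₂ n)
      have hF : (0:ℝ) < Complex.abs ((n.factorial : ℕ):ℂ) := by
        rw [Complex.abs_natCast]
        exact_mod_cast n.factorial_pos
      have hA1 : Complex.abs (((n:ℕ):ℂ)^z₁) = (n:ℝ)^x₁ := by
        rw [show ((n:ℕ):ℂ) = (((n:ℕ):ℝ):ℂ) by push_cast; rfl]
        rw [Complex.abs_cpow_eq_rpow_re_of_pos hnpos]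
        simp [hz₁]
      have hA2 : Complex.abs (((n:ℕ):ℂ)^z₂) = (n:ℝ)^x₂ := by
        rw [show ((n:ℕ):ℂ) = (((n:ℕ):ℝ):ℂ) by push_cast; rfl]
        rw [Complex.abs_cpow_eq_rpow_re_of_pos hnpos]
        simp [hz₂]
      rw [Complex.GammaSeq, Complex.GammaSeq, map_div₀, map_div₀, map_div₀, map_mul,
        map_mul, map_prod, map_prod, hA1, hA2]
      rw [Finset.prod_div_distrib, Real.rpow_sub hnpos]
      have hr1 : (0:ℝ) < (n:ℝ)^x₁ := Real.rpow_pos_of_pos hnpos _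
      have hr2 : (0:ℝ) < (n:ℝ)^x₂ := Real.rpow_pos_of_pos hnpos _
      have fieldid : ∀ (a b c d e : ℝ), e ≠ 0 → b ≠ 0 → c ≠ 0 → d ≠ 0 →
          (a*e/c) / (b*e/d) = (a/b) * (d/c) := by
        intros a b c d e he hb hc hd
        field_simp
      have hQ1' : (0:ℝ) < ∏ j ∈ Finset.range (n+1), Complex.abs (z₁+j) :=
        Finset.prod_pos fun j _ => Complex.abs.pos (hne x₁ j)
      have hQ2' : (0:ℝ) < ∏ j ∈ Finset.range (n+1), Complex.abs (z₂+j) :=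
        Finset.prod_pos fun j _ => Complex.abs.pos (hne x₂ j)
      exact fieldid _ _ _ _ _ (ne_of_gt hF) (ne_of_gt hr2) (ne_of_gt hQ1') (ne_of_gt hQ2')
    rw [habsratio]
    exact key
  have hlim := le_of_tendsto htend hev
  have : Complex.abs (Complex.Gamma z₁) =
      Complex.abs (Complex.Gamma z₁ / Complex.Gamma z₂) * Complex.abs (Complex.Gamma z₂) := by
    rw [← map_mul, div_mul_cancel₀ _ hG2]
  rw [this]
  apply mul_le_mul_of_nonneg_right hlim (Complex.abs.nonneg _)



lemma absGamma_neg (x u : ℝ) :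
    Complex.abs (Complex.Gamma ((x:ℂ) + ((-u:ℝ):ℂ)*I)) =
      Complex.abs (Complex.Gamma ((x:ℂ) + (u:ℂ)*I)) := by
  have h : ((x:ℂ) + ((-u:ℝ):ℂ)*I) = starRingEnd ℂ ((x:ℂ) + (u:ℂ)*I) := by
    apply Complex.ext <;> simp
  rw [h, Complex.Gamma_conj, Complex.abs_conj]

set_option maxHeartbeats 2000000 in
/-- Symbol estimate of order `2·Re s − 1` for the Fourier coefficients of the
funnel scattering matrix. -/
theorem stmt6 (s : ℂ) (ω : ℝ) (hω : 0 < ω) (ϑ : ℝ) :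
    ∃ C > 0, ∀ k : ℤ,
      Complex.Gamma (s - 1/2) * betaFun ω (k + ϑ) (1 - s) ≠ 0 →
      ‖Complex.Gamma (1/2 - s) * betaFun ω (k + ϑ) s /
          (Complex.Gamma (s - 1/2) * betaFun ω (k + ϑ) (1 - s))‖ ≤
        C * (1 + |(k : ℝ)|) ^ (2 * s.re - 1) := by
  simp only [Complex.norm_eq_abs]
  by_cases hG₂ : Complex.Gamma (s - 1/2) = 0
  · exact ⟨1, one_pos, fun k hk => absurd (by rw [hG₂, zero_mul]) hk⟩
  set xa : ℝ := (s.re+1)/2 with hxa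
  set xb : ℝ := (2-s.re)/2 with hxb
  set p : ℝ := s.re - 1/2 with hp
  have hpab : xa - xb = p := by rw [hxa, hxb, hp]; ring
  obtain ⟨C₀, hC₀pos, hC₀⟩ := gammaA xa xb
  set B : ℝ := (ω + ω*|ϑ| + |s.im|)/2 with hB
  have hBpos : 0 < B := by positivity
  set Mb : ℝ := max ((ω/4)^p) (B^p) with hMb
  have hMbpos : 0 < Mb :=
    lt_of_lt_of_le (Real.rpow_pos_of_pos (by positivity) p) (le_max_left _ _)
  set K : ℝ := (6*|s.im| + 8*|xb-xa| + 8 + 2*ω)/ω + 3*|ϑ| + 3 with hK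
  have hKpos : 0 < K := by positivity
  set G₁ : ℝ := Complex.abs (Complex.Gamma (1/2 - s)) with hG1
  set G₂ : ℝ := Complex.abs (Complex.Gamma (s - 1/2)) with hG2'
  have hG₂pos : 0 < G₂ := Complex.abs.pos hG₂
  set CA : ℝ := (C₀^2 * G₁ / G₂) * Mb^2 with hCA
  have hCAnn : 0 ≤ CA := by positivity
  set S : Finset ℤ := Finset.Icc (-(⌈K⌉₊:ℤ)) (⌈K⌉₊:ℤ) with hS
  have hS0 : (0:ℤ) ∈ S := by
    simp only [hS, Finset.mem_Icc]
    constructor <;> simp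
  set fS : ℤ → ℝ := fun k =>
    Complex.abs (Complex.Gamma (1/2 - s) * betaFun ω (k + ϑ) s /
        (Complex.Gamma (s - 1/2) * betaFun ω (k + ϑ) (1 - s)))
      / ((1 + |(k : ℝ)|) ^ (2 * s.re - 1)) with hfS
  set Cfin : ℝ := S.sup' ⟨0, hS0⟩ fS with hCfin
  have hCfin0 : 0 ≤ Cfin := by
    refine le_trans ?_ (Finset.le_sup' fS hS0)
    rw [hfS]
    positivity
  refine ⟨CA + Cfin + 1, by positivity, fun k hk => ?_⟩
  have hXpos : (0:ℝ) < 1 + |(k:ℝ)| := by positivity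
  have hRpos : (0:ℝ) < (1 + |(k : ℝ)|) ^ (2 * s.re - 1) :=
    Real.rpow_pos_of_pos hXpos _
  by_cases hkK : K ≤ |(k:ℝ)|
  · -- asymptotic regime
    set κv : ℝ := (k:ℝ) + ϑ with hκv
    set t : ℝ := ω*κv with ht
    set y₁ : ℝ := (t - s.im)/2 with hy₁
    set y₃ : ℝ := (s.im + t)/2 with hy₃
    have habsdiff : ∀ a b : ℝ, |a| - |b| ≤ |a + b| := by
      intro a b
      have := abs_add_le (a+b) (-b); simp at this; linarith
    -- lower bound on |t|
    have hPK : ω*K = 6*|s.im| + 8*|xb-xa| + 8 + 2*ω + 3*(ω*|ϑ|) + 3*ω := by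
      rw [hK]; field_simp
    have hP1 : ω*K ≤ ω*|(k:ℝ)| := mul_le_mul_of_nonneg_left hkK (le_of_lt hω)
    have htlow : ω*|(k:ℝ)| - ω*|ϑ| ≤ |t| := by
      have h1 : |(k:ℝ)| - |ϑ| ≤ |κv| := by
        rw [hκv]; exact habsdiff _ _
      rw [ht, abs_mul, abs_of_pos hω]
      have h2 := mul_le_mul_of_nonneg_left h1 (le_of_lt hω)
      rw [mul_sub] at h2
      linarith
    have htup : |t| ≤ ω*|(k:ℝ)| + ω*|ϑ| := by
      rw [ht, abs_mul, abs_of_pos hω]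
      have h1 : |κv| ≤ |(k:ℝ)| + |ϑ| := by rw [hκv]; exact abs_add_le _ _
      have h2 := mul_le_mul_of_nonneg_left h1 (le_of_lt hω)
      rw [mul_add] at h2
      linarith
    have htbig : 3*|s.im| + 4*|xb-xa| + 4 + ω + ω*|(k:ℝ)|/2 ≤ |t| := by
      linarith [htlow, hP1, hPK, hω, abs_nonneg ϑ, mul_nonneg (le_of_lt hω) (abs_nonneg ϑ)]
    -- bounds on |y₁|, |y₃|
    have hy₁low : (|t| - |s.im|)/2 ≤ |y₁| := by
      rw [hy₁, abs_div, _root_.abs_two]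
      have h1 : |t| - |s.im| ≤ |t - s.im| := by
        have := habsdiff t (-s.im)
        simpa [sub_eq_add_neg] using this
      linarith
    have hy₁up : |y₁| ≤ (|t| + |s.im|)/2 := by
      rw [hy₁, abs_div, _root_.abs_two]
      have := abs_sub t s.im
      linarith [abs_sub t s.im]
    have hy₃low : (|t| - |s.im|)/2 ≤ |y₃| := by
      rw [hy₃, abs_div, _root_.abs_two]
      have h1 : |t| - |s.im| ≤ |s.im + t| := by
        have := habsdiff t s.im
        rwa [add_comm t s.im] at this
      linarith
    have hy₃up : |y₃| ≤ (|t| + |s.im|)/2 := by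
      rw [hy₃, abs_div, _root_.abs_two]
      linarith [abs_add_le s.im t]
    -- size facts
    have hsim : 0 ≤ |s.im| := abs_nonneg _
    have hd : 0 ≤ |xb-xa| := abs_nonneg _
    have hknn : 0 ≤ |(k:ℝ)| := abs_nonneg _
    have hF1a : 2 ≤ |y₁| := by linarith
    have hF1b : 2 ≤ |y₃| := by linarith
    have hF2a : 2*|xb-xa| ≤ |y₁| := by linarith
    have hF2b : 2*|xb-xa| ≤ |y₃| := by linarith
    have hexp : (ω/4)*(1+|(k:ℝ)|) = ω/4 + ω*|(k:ℝ)|/4 := by ring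
    have hF3a : (ω/4)*(1+|(k:ℝ)|) ≤ |y₁| := by rw [hexp]; linarith
    have hF3b : (ω/4)*(1+|(k:ℝ)|) ≤ |y₃| := by rw [hexp]; linarith
    have hF4 : (|t| + |s.im|)/2 ≤ B*(1+|(k:ℝ)|) := by
      have hB2 : ω/2 ≤ B := by
        rw [hB]
        linarith [mul_nonneg (le_of_lt hω) (abs_nonneg ϑ), abs_nonneg s.im]
      have hBk : ω*|(k:ℝ)|/2 ≤ B*|(k:ℝ)| := by
        calc ω*|(k:ℝ)|/2 = (ω/2)*|(k:ℝ)| := by ring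
          _ ≤ B*|(k:ℝ)| := mul_le_mul_of_nonneg_right hB2 hknn
      have hexp2 : B*(1+|(k:ℝ)|) = B + B*|(k:ℝ)| := by ring
      rw [hexp2]
      linarith [htup, hBk, hB, mul_nonneg (le_of_lt hω) (abs_nonneg ϑ)]
    have hF4a : |y₁| ≤ B*(1+|(k:ℝ)|) := le_trans hy₁up hF4
    have hF4b : |y₃| ≤ B*(1+|(k:ℝ)|) := le_trans hy₃up hF4
    -- rpow comparison
    have hcomp : ∀ u:ℝ, (ω/4)*(1+|(k:ℝ)|) ≤ u → u ≤ B*(1+|(k:ℝ)|) →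
        u^p ≤ Mb * (1+|(k:ℝ)|)^p := by
      intro u h1 h2
      have hup : (0:ℝ) < u := lt_of_lt_of_le (by positivity) h1
      rcases le_or_gt 0 p with hp0 | hp0
      · calc u^p ≤ (B*(1+|(k:ℝ)|))^p := Real.rpow_le_rpow (le_of_lt hup) h2 hp0
          _ = B^p * (1+|(k:ℝ)|)^p := Real.mul_rpow (le_of_lt hBpos) (le_of_lt hXpos)
          _ ≤ Mb * (1+|(k:ℝ)|)^p :=
            mul_le_mul_of_nonneg_right (le_max_right _ _) (Real.rpow_nonneg (le_of_lt hXpos) _)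
      · calc u^p ≤ ((ω/4)*(1+|(k:ℝ)|))^p :=
            Real.rpow_le_rpow_of_nonpos (by positivity) h1 (le_of_lt hp0)
          _ = (ω/4)^p * (1+|(k:ℝ)|)^p := Real.mul_rpow (by positivity) (le_of_lt hXpos)
          _ ≤ Mb * (1+|(k:ℝ)|)^p :=
            mul_le_mul_of_nonneg_right (le_max_left _ _) (Real.rpow_nonneg (le_of_lt hXpos) _)
    have hcompa := hcomp _ hF3a hF4a
    have hcompb := hcomp _ hF3b hF4b
    -- gamma estimates
    have hE₁ : Complex.abs (Complex.Gamma ((xa:ℂ) + (y₃:ℂ)*I))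
        ≤ C₀ * |y₃|^p * Complex.abs (Complex.Gamma ((xb:ℂ) + (y₃:ℂ)*I)) := by
      have := hC₀ y₃ hF1b hF2b
      rwa [hpab] at this
    have hE₂ : Complex.abs (Complex.Gamma ((xa:ℂ) + (y₁:ℂ)*I))
        ≤ C₀ * |y₁|^p * Complex.abs (Complex.Gamma ((xb:ℂ) + (y₁:ℂ)*I)) := by
      have := hC₀ y₁ hF1a hF2a
      rwa [hpab] at this
    -- argument identities
    have ea₁ : (s + I*(ω:ℂ)*((κv:ℝ):ℂ) + 1)/2 = ((xa:ℝ):ℂ) + ((y₃:ℝ):ℂ)*I := by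
      rw [hxa, hy₃, ht]
      rw [div_eq_iff (two_ne_zero' ℂ)]
      apply Complex.ext <;> simp <;> ring
    have ea₂ : (s - I*(ω:ℂ)*((κv:ℝ):ℂ) + 1)/2 = ((xa:ℝ):ℂ) + ((-y₁:ℝ):ℂ)*I := by
      rw [hxa, hy₁, ht]
      rw [div_eq_iff (two_ne_zero' ℂ)]
      apply Complex.ext <;> simp <;> ring
    have eb₁ : ((1-s) + I*(ω:ℂ)*((κv:ℝ):ℂ) + 1)/2 = ((xb:ℝ):ℂ) + ((y₁:ℝ):ℂ)*I := by
      rw [hxb, hy₁, ht]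
      rw [div_eq_iff (two_ne_zero' ℂ)]
      apply Complex.ext <;> simp <;> ring
    have eb₂ : ((1-s) - I*(ω:ℂ)*((κv:ℝ):ℂ) + 1)/2 = ((xb:ℝ):ℂ) + ((-y₃:ℝ):ℂ)*I := by
      rw [hxb, hy₃, ht]
      rw [div_eq_iff (two_ne_zero' ℂ)]
      apply Complex.ext <;> simp <;> ring
    -- abbreviations for the four gamma moduli
    set A₁ : ℝ := Complex.abs (Complex.Gamma (((xa:ℝ):ℂ) + ((y₃:ℝ):ℂ)*I)) with hA₁
    set A₂ : ℝ := Complex.abs (Complex.Gamma (((xa:ℝ):ℂ) + ((-y₁:ℝ):ℂ)*I)) with hA₂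
    set B₁ : ℝ := Complex.abs (Complex.Gamma (((xb:ℝ):ℂ) + ((y₁:ℝ):ℂ)*I)) with hB₁
    set B₂ : ℝ := Complex.abs (Complex.Gamma (((xb:ℝ):ℂ) + ((-y₃:ℝ):ℂ)*I)) with hB₂
    have hA₂eq : A₂ = Complex.abs (Complex.Gamma (((xa:ℝ):ℂ) + ((y₁:ℝ):ℂ)*I)) := by
      rw [hA₂]; exact absGamma_neg xa y₁
    have hB₂eq : B₂ = Complex.abs (Complex.Gamma (((xb:ℝ):ℂ) + ((y₃:ℝ):ℂ)*I)) := by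
      rw [hB₂]; exact absGamma_neg xb y₃
    -- compute the LHS
    have hLHS : Complex.abs (Complex.Gamma (1/2 - s) * betaFun ω κv s /
        (Complex.Gamma (s - 1/2) * betaFun ω κv (1 - s)))
        = (G₁ * (1/2 * A₁ * A₂)) / (G₂ * (1/2 * B₁ * B₂)) := by
      rw [map_div₀, map_mul, map_mul]
      rw [show betaFun ω κv s = (1/2) * Complex.Gamma ((s + Complex.I * ω * κv + 1) / 2) *
        Complex.Gamma ((s - Complex.I * ω * κv + 1) / 2) from rfl]
      rw [show betaFun ω κv (1-s) = (1/2) * Complex.Gamma (((1-s) + Complex.I * ω * κv + 1) / 2) *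
        Complex.Gamma (((1-s) - Complex.I * ω * κv + 1) / 2) from rfl]
      rw [ea₁, ea₂, eb₁, eb₂]
      rw [map_mul, map_mul, map_mul, map_mul]
      norm_num
      rw [hA₁, hA₂, hB₁, hB₂, hG1, hG2']
      simp [Complex.ofReal_neg, neg_mul, ← Complex.norm_eq_abs]
    -- positivity of denominator pieces
    have hkppair := mul_ne_zero_iff.mp hk
    have hβne := hkppair.2
    have hβsplit : ((1:ℂ)/2) * Complex.Gamma (((1-s) + Complex.I * ω * κv + 1) / 2) ≠ 0
        ∧ Complex.Gamma (((1-s) - Complex.I * ω * κv + 1) / 2) ≠ 0 := by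
      have : betaFun ω κv (1-s) = ((1:ℂ)/2) * Complex.Gamma (((1-s) + Complex.I * ω * κv + 1) / 2) *
          Complex.Gamma (((1-s) - Complex.I * ω * κv + 1) / 2) := rfl
      rw [this] at hβne
      exact mul_ne_zero_iff.mp hβne
    have hB₁pos : 0 < B₁ := by
      rw [hB₁, ← eb₁]
      exact Complex.abs.pos (mul_ne_zero_iff.mp hβsplit.1).2
    have hB₂pos : 0 < B₂ := by
      rw [hB₂, ← eb₂]
      exact Complex.abs.pos hβsplit.2
    have hDpos : 0 < G₂ * (1/2 * B₁ * B₂) := by positivity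
    have hG₁nn : 0 ≤ G₁ := Complex.abs.nonneg _
    have hA₁nn : 0 ≤ A₁ := Complex.abs.nonneg _
    have hA₂nn : 0 ≤ A₂ := Complex.abs.nonneg _
    rw [hLHS, div_le_iff₀ hDpos]
    have hyp1nn : (0:ℝ) ≤ |y₁|^p := Real.rpow_nonneg (abs_nonneg _) _
    have hyp3nn : (0:ℝ) ≤ |y₃|^p := Real.rpow_nonneg (abs_nonneg _) _
    have hXp_nn : (0:ℝ) ≤ (1+|(k:ℝ)|)^p := Real.rpow_nonneg (le_of_lt hXpos) _
    calc G₁ * (1/2 * A₁ * A₂)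
        ≤ G₁ * (1/2 * (C₀ * |y₃|^p * B₂) * (C₀ * |y₁|^p * B₁)) := by
          apply mul_le_mul_of_nonneg_left _ hG₁nn
          apply mul_le_mul
          · apply mul_le_mul_of_nonneg_left _ (by norm_num : (0:ℝ) ≤ 1/2)
            rw [hB₂eq]
            rw [hA₁]
            exact hE₁
          · rw [hA₂eq]
            exact hE₂
          · exact hA₂nn
          · positivity
      _ = (C₀^2 * (|y₃|^p * |y₁|^p)) * (G₁ * (1/2 * B₁ * B₂)) := by ring
      _ ≤ (C₀^2 * ((Mb * (1+|(k:ℝ)|)^p) * (Mb * (1+|(k:ℝ)|)^p))) * (G₁ * (1/2 * B₁ * B₂)) := by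
          apply mul_le_mul_of_nonneg_right _ (by positivity)
          apply mul_le_mul_of_nonneg_left _ (by positivity)
          exact mul_le_mul hcompb hcompa hyp1nn (by positivity)
      _ = (C₀^2 * Mb^2 * G₁) * ((1+|(k:ℝ)|)^p * (1+|(k:ℝ)|)^p) * (1/2 * B₁ * B₂) := by ring
      _ = (CA * G₂) * ((1+|(k:ℝ)|)^(2*s.re-1)) * (1/2 * B₁ * B₂) := by
          rw [← Real.rpow_add hXpos]
          rw [show p + p = 2*s.re - 1 by rw [hp]; ring]
          rw [show C₀^2 * Mb^2 * G₁ = CA * G₂ by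
            rw [hCA]; field_simp]
      _ ≤ ((CA + Cfin + 1) * (1+|(k:ℝ)|)^(2*s.re-1)) * (G₂ * (1/2 * B₁ * B₂)) := by
          rw [show (CA * G₂) * ((1+|(k:ℝ)|)^(2*s.re-1)) * (1/2 * B₁ * B₂)
              = (CA * (1+|(k:ℝ)|)^(2*s.re-1)) * (G₂ * (1/2 * B₁ * B₂)) by ring]
          apply mul_le_mul_of_nonneg_right _ (le_of_lt hDpos)
          apply mul_le_mul_of_nonneg_right _ (le_of_lt hRpos)
          linarith
  · -- finite regime
    push_neg at hkK
    have hkS : k ∈ S := by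
      rw [hS, Finset.mem_Icc]
      have h1 : |(k:ℝ)| ≤ ((⌈K⌉₊:ℤ):ℝ) := by
        push_cast
        exact le_trans (le_of_lt hkK) (Nat.le_ceil K)
      have h2 : |k| ≤ (⌈K⌉₊:ℤ) := by
        have : ((|k|:ℤ):ℝ) ≤ ((⌈K⌉₊:ℤ):ℝ) := by push_cast; push_cast at h1; exact h1
        exact_mod_cast this
      exact abs_le.mp h2
    have hle := Finset.le_sup' fS hkS
    rw [← hCfin] at hle
    have heq : Complex.abs (Complex.Gamma (1/2 - s) * betaFun ω (k + ϑ) s /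
        (Complex.Gamma (s - 1/2) * betaFun ω (k + ϑ) (1 - s)))
        = fS k * (1 + |(k : ℝ)|) ^ (2 * s.re - 1) := by
      rw [hfS]
      rw [div_mul_cancel₀ _ (ne_of_gt hRpos)]
    rw [heq]
    have : fS k * (1 + |(k : ℝ)|) ^ (2 * s.re - 1) ≤ Cfin * (1 + |(k : ℝ)|) ^ (2 * s.re - 1) :=
      mul_le_mul_of_nonneg_right hle (le_of_lt hRpos)
    refine le_trans this ?_
    apply mul_le_mul_of_nonneg_right _ (le_of_lt hRpos)
    linarith
end
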